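/- arXiv:0706.2428 — 7 statements merged into one kernel-verified Lean document; each statement's English description precedes it below -/
import Mathlib

section
/- Let n ≥ 1, let X ∈ M_n(ℂ), and let φ : M_n(ℂ) → ℝ be real-differentiable at X with gradient ∇φ|_X, such that φ(C X C⁻¹) = φ(X) for every invertible C ∈ M_n(ℂ) whose first row and first column have all off-diagonal entries equal to zero. Then for every B ∈ M_n(ℂ): ⟨∇φ|_X, [X, B]⟩ = ⟨∇φ|_X, [X, BP + PB]⟩, and consequently ⟨∇φ|_X, [X, B]⟩ = ⟨[∇φ|_X, X], BP + PB⟩. -/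
open Matrix Complex Filter

attribute [local instance] Matrix.normedAddCommGroup Matrix.normedSpace

/-- The pairing `⟨X, Y⟩ = Im Tr (X Y)` on `n × n` complex matrices. -/
noncomputable def pairIm {n : ℕ} (X Y : Matrix (Fin n) (Fin n) ℂ) : ℝ :=
  (Matrix.trace (X * Y)).im

/-- `P`, the matrix whose `(1,1)` entry is `1` and all other entries are `0`. -/
noncomputable def Pmat (n : ℕ) (hn : 0 < n) : Matrix (Fin n) (Fin n) ℂ :=
  Matrix.single ⟨0, hn⟩ ⟨0, hn⟩ 1

lemma pairIm_sub_right {n : ℕ} (G Y Z : Matrix (Fin n) (Fin n) ℂ) :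
    pairIm G (Y - Z) = pairIm G Y - pairIm G Z := by
  unfold pairIm
  rw [mul_sub, trace_sub, Complex.sub_im]

lemma pairIm_comm_right {n : ℕ} (G X M : Matrix (Fin n) (Fin n) ℂ) :
    pairIm G (X * M - M * X) = pairIm (G * X - X * G) M := by
  unfold pairIm
  congr 1
  rw [mul_sub, sub_mul, trace_sub, trace_sub, mul_assoc G X M,
    trace_mul_comm G (M * X), mul_assoc M X G, trace_mul_comm M (X * G)]

/-- Key analytic lemma: differentiating the conjugation-invariance along the
curve `t ↦ (1 + t•A) X (1 + t•A)⁻¹` shows the gradient pairs to zero with `[A,X]`. -/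
lemma deriv_vanish {n : ℕ} (X G A : Matrix (Fin n) (Fin n) ℂ)
    (φ : Matrix (Fin n) (Fin n) ℂ → ℝ)
    (D : Matrix (Fin n) (Fin n) ℂ →L[ℝ] ℝ)
    (hdiff : HasFDerivAt φ D X)
    (hgrad : ∀ C : Matrix (Fin n) (Fin n) ℂ, D C = pairIm G C)
    (hφ : ∀ t : ℝ, IsUnit ((1 : Matrix (Fin n) (Fin n) ℂ) + t • A) →
      φ ((1 + t • A) * X * (1 + t • A)⁻¹) = φ X) :
    pairIm G (A * X - X * A) = 0 := by
  set W : Matrix (Fin n) (Fin n) ℂ := A * X - X * A with hW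
  set u : ℝ → Matrix (Fin n) (Fin n) ℂ := fun t => 1 + t • A with hu
  have hu0 : u 0 = 1 := by simp [hu]
  have hucont : Continuous u := continuous_const.add (continuous_id.smul continuous_const)
  have hev : ∀ᶠ t in nhds (0:ℝ), IsUnit (u t) := by
    have hdet : Continuous fun t => (u t).det := hucont.matrix_det
    have h1 : (u 0).det ≠ 0 := by simp [hu0]
    exact (hdet.continuousAt.eventually_ne h1).mono fun t ht =>
      (Matrix.isUnit_iff_isUnit_det _).2 (isUnit_iff_ne_zero.2 ht)
  have hinv1 : (u 0)⁻¹ = 1 := by rw [hu0, inv_one]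
  have hinvc : ContinuousAt (fun t => (u t)⁻¹) 0 := by
    have h1 : ContinuousAt Inv.inv (u 0) := by
      apply continuousAt_matrix_inv
      rw [Ring.inverse_eq_inv']
      apply continuousAt_inv₀
      simp [hu0]
    exact h1.comp hucont.continuousAt
  have hform : ∀ᶠ t in nhds (0:ℝ), u t * X * (u t)⁻¹ = X + t • (W * (u t)⁻¹) := by
    filter_upwards [hev] with t ht
    have hdet' : IsUnit (u t).det := (Matrix.isUnit_iff_isUnit_det _).1 ht
    have h1 : u t * (u t)⁻¹ = 1 := Matrix.mul_nonsing_inv _ hdet'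
    have h2 : X * (u t)⁻¹ + t • (X * (A * (u t)⁻¹)) = X := by
      have h3 := congrArg (fun M => X * M) h1
      simpa [hu, add_mul, mul_add, one_mul, mul_one, smul_mul_assoc, mul_smul_comm,
        mul_assoc] using h3
    calc u t * X * (u t)⁻¹
        = X * (u t)⁻¹ + t • (A * (X * (u t)⁻¹)) := by
          simp [hu, add_mul, smul_mul_assoc, mul_assoc]
      _ = X + t • (W * (u t)⁻¹) := by
          conv_rhs => rw [← h2]
          rw [hW, sub_mul, smul_sub, mul_assoc, mul_assoc]
          abel
  have hWc : Tendsto (fun t => W * (u t)⁻¹) (nhds (0:ℝ)) (nhds W) := by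
    have := (continuousAt_const.mul hinvc : ContinuousAt (fun t => W * (u t)⁻¹) 0)
    have h := (tendsto_const_nhds (x := W) (f := nhds (0:ℝ))).mul hinvc.tendsto
    simp only [hinv1, mul_one] at h
    exact h
  have hg : HasDerivAt (fun t : ℝ => X + t • (W * (u t)⁻¹)) W 0 := by
    refine (hasDerivAt_iff_tendsto_slope (f := fun t : ℝ => X + t • (W * (u t)⁻¹)) (f' := W) (x := 0)).mpr ?_
    refine (hWc.mono_left nhdsWithin_le_nhds).congr' ?_
    filter_upwards [self_mem_nhdsWithin] with t ht
    have ht' : t ≠ 0 := ht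
    rw [slope_def_module]
    simp [ht', smul_smul, inv_mul_cancel₀ ht']
  have hc : HasDerivAt (fun t => u t * X * (u t)⁻¹) W 0 := hg.congr_of_eventuallyEq hform
  have hφc : HasDerivAt (fun t => φ (u t * X * (u t)⁻¹)) (D W) 0 := by
    have h0 : u 0 * X * (u 0)⁻¹ = X := by rw [hu0, inv_one, one_mul, mul_one]
    have hd : HasFDerivAt φ D (u 0 * X * (u 0)⁻¹) := by rw [h0]; exact hdiff
    exact hd.comp_hasDerivAt 0 hc
  have hconst : HasDerivAt (fun t => φ (u t * X * (u t)⁻¹)) 0 0 := by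
    refine (hasDerivAt_const (0:ℝ) (φ X)).congr_of_eventuallyEq ?_
    filter_upwards [hev] with t ht
    exact hφ t ht
  have hDW : D W = 0 := hφc.unique hconst
  rw [hgrad] at hDW
  exact hDW

/-- If `φ` is real-differentiable at `X` with gradient `G` (with respect to
the pairing `⟨X,Y⟩ = Im Tr(XY)`), and `φ` is invariant under conjugation by all invertible
matrices whose first row and column have all off-diagonal entries equal to zero, then for
every matrix `B` one has `⟨G, [X,B]⟩ = ⟨G, [X, BP + PB]⟩ = ⟨[G,X], BP + PB⟩`. -/
theorem statement0 (n : ℕ) (hn : 0 < n)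
    (X G B : Matrix (Fin n) (Fin n) ℂ)
    (φ : Matrix (Fin n) (Fin n) ℂ → ℝ)
    (D : Matrix (Fin n) (Fin n) ℂ →L[ℝ] ℝ)
    (hdiff : HasFDerivAt φ D X)
    (hgrad : ∀ C : Matrix (Fin n) (Fin n) ℂ, D C = pairIm G C)
    (hinv : ∀ C : Matrix (Fin n) (Fin n) ℂ, IsUnit C →
      (∀ j : Fin n, j ≠ ⟨0, hn⟩ → C ⟨0, hn⟩ j = 0 ∧ C j ⟨0, hn⟩ = 0) →
      φ (C * X * C⁻¹) = φ X) :
    pairIm G (X * B - B * X) =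
      pairIm G (X * (B * Pmat n hn + Pmat n hn * B) -
        (B * Pmat n hn + Pmat n hn * B) * X) ∧
    pairIm G (X * B - B * X) =
      pairIm (G * X - X * G) (B * Pmat n hn + Pmat n hn * B) := by
  set z : Fin n := ⟨0, hn⟩ with hz
  set P : Matrix (Fin n) (Fin n) ℂ := Pmat n hn with hP
  set M : Matrix (Fin n) (Fin n) ℂ := B * P + P * B with hM
  set A : Matrix (Fin n) (Fin n) ℂ := B - M with hA
  have hAentry : ∀ j : Fin n, j ≠ z → A z j = 0 ∧ A j z = 0 := by
    intro j hj
    have hj' : z ≠ j := Ne.symm hj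
    constructor <;>
      simp [hA, hM, hP, Pmat, Matrix.sub_apply, Matrix.add_apply, hj, hj', ← hz,
        Matrix.mul_single_apply_of_ne, Matrix.single_mul_apply_same,
        Matrix.mul_single_apply_same, Matrix.single_mul_apply_of_ne]
  have hφ : ∀ t : ℝ, IsUnit ((1 : Matrix (Fin n) (Fin n) ℂ) + t • A) →
      φ ((1 + t • A) * X * (1 + t • A)⁻¹) = φ X := by
    intro t ht
    refine hinv _ ht ?_
    intro j hj
    have h := hAentry j hj
    constructor
    · rw [Matrix.add_apply, Matrix.smul_apply, Matrix.one_apply_ne (Ne.symm hj), h.1,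
        smul_zero, add_zero]
    · rw [Matrix.add_apply, Matrix.smul_apply, Matrix.one_apply_ne hj, h.2,
        smul_zero, add_zero]
  have hzero : pairIm G (A * X - X * A) = 0 :=
    deriv_vanish X G A φ D hdiff hgrad hφ
  have hzero' : pairIm G (X * A - A * X) = 0 := by
    have he : X * A - A * X = (0 : Matrix (Fin n) (Fin n) ℂ) - (A * X - X * A) := by
      noncomm_ring
    rw [he, pairIm_sub_right, hzero, sub_zero]
    unfold pairIm
    simp
  have hdiffmat : (X * B - B * X) - (X * M - M * X) = X * A - A * X := by
    rw [hA]; noncomm_ring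
  have hmain : pairIm G (X * B - B * X) = pairIm G (X * M - M * X) := by
    have := pairIm_sub_right G (X * B - B * X) (X * M - M * X)
    rw [hdiffmat, hzero'] at this
    linarith
  exact ⟨hmain, hmain.trans (pairIm_comm_right G X M)⟩
end

section
/- Let n ≥ 2, let z₁,…,z_n be distinct points on the unit circle in ℂ, and let μ₁,…,μ_n ∈ (0,1) with μ₁+⋯+μ_n = 1. Define F(z) := Σ_{j=1}^n μ_j (z_j+z)/(z_j−z) and G(z,w) := i(F(z)−F(w))(F(z)F(w)−1) − i((z+w)/(z−w))(F(z)−F(w))². Let s ≠ t, and let δ, ε > 0 be small enough that the closed disks of radius δ around z_s and radius ε around z_t are disjoint and each contains exactly one of the points z₁,…,z_n. Then (1/(2πi)²) ∮_{|w−z_t|=ε} ∮_{|z−z_s|=δ} (z−z_s)(w−z_t) G(z,w) dz dw = 0. -/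
open Complex Metric


set_option maxHeartbeats 1000000 in
private lemma key_identity6 (ζ w zs zt c x y : ℂ) (h2 : ζ - zs ≠ 0) (hζw : ζ - w ≠ 0)
    (hzsw : zs - w ≠ 0) :
    (ζ - zs) * (w - zt) * (Complex.I * ((c / (ζ - zs) + x) - y) * ((c / (ζ - zs) + x) * y - 1)
        - Complex.I * ((ζ + w) / (ζ - w)) * ((c / (ζ - zs) + x) - y) ^ 2)
      = (Complex.I * (w - zt) * c ^ 2 * (y - (zs + w) / (zs - w))) * (ζ - zs)⁻¹
        + Complex.I * (w - zt) * (c * (x * y - 1) + c * y * (x - y)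
          + (ζ - zs) * (x - y) * (x * y - 1)
          - 2 * c * ((ζ + w) / (ζ - w)) * (x - y)
          - (ζ - zs) * ((ζ + w) / (ζ - w)) * (x - y) ^ 2
          + 2 * c ^ 2 * w / ((ζ - w) * (zs - w))) := by
  field_simp
  ring

private lemma key_identity6t (w zs zt ct c x K : ℂ) (h2 : w - zt ≠ 0) (h3 : zs - w ≠ 0) :
    (Complex.I * (w - zt) * c ^ 2 * ((ct / (w - zt) + x) - (zs + w) / (zs - w))) * K
      = (Complex.I * c ^ 2 * (ct + (w - zt) * x - (w - zt) * ((zs + w) / (zs - w)))) * K := by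
  congr 1
  field_simp

set_option maxHeartbeats 2000000 in
/-- For the Carathéodory function `F` of a probability measure supported
at `n ≥ 2` distinct points of the unit circle, and
`G(z,w) = i(F(z)−F(w))(F(z)F(w)−1) − i((z+w)/(z−w))(F(z)−F(w))²` the Gelfand–Dikij
bracket `{F(z),F(w)}_GD`, the double residue extracting `{z_s,z_t}` vanishes for `s ≠ t`:
`(1/(2πi)²) ∮_{|w−z_t|=ε} ∮_{|z−z_s|=δ} (z−z_s)(w−z_t) G(z,w) dz dw = 0`. -/
theorem statement6 (n : ℕ) (hn : 2 ≤ n) (z : Fin n → ℂ) (μ : Fin n → ℝ)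
    (hz : ∀ j, ‖z j‖ = 1) (hinj : Function.Injective z)
    (hμ : ∀ j, μ j ∈ Set.Ioo (0 : ℝ) 1) (hsum : ∑ j, μ j = 1)
    (F : ℂ → ℂ) (hF : ∀ ζ, F ζ = ∑ j, (μ j : ℂ) * (z j + ζ) / (z j - ζ))
    (G : ℂ → ℂ → ℂ)
    (hG : ∀ ζ ω, G ζ ω = Complex.I * (F ζ - F ω) * (F ζ * F ω - 1) -
      Complex.I * ((ζ + ω) / (ζ - ω)) * (F ζ - F ω) ^ 2)
    (s t : Fin n) (hst : s ≠ t) (δ ε : ℝ) (hδ : 0 < δ) (hε : 0 < ε)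
    (hdisj : Disjoint (closedBall (z s) δ) (closedBall (z t) ε))
    (hone_s : ∀ j, z j ∈ closedBall (z s) δ ↔ j = s)
    (hone_t : ∀ j, z j ∈ closedBall (z t) ε ↔ j = t) :
    (1 / (2 * (Real.pi : ℂ) * Complex.I)) ^ 2 *
      (∮ w in C(z t, ε), ∮ ζ in C(z s, δ), (ζ - z s) * (w - z t) * G ζ w) = 0 := by
  have hzs_s : z s ∈ closedBall (z s) δ := mem_closedBall_self hδ.le
  have hzt_t : z t ∈ closedBall (z t) ε := mem_closedBall_self hε.le
  have hzj_s : ∀ j, j ≠ s → z j ∉ closedBall (z s) δ := fun j hj hjm => hj ((hone_s j).1 hjm)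
  have hzj_t : ∀ j, j ≠ t → z j ∉ closedBall (z t) ε := fun j hj hjm => hj ((hone_t j).1 hjm)
  set c : ℂ := -(2 * (μ s : ℂ) * z s) with hcdef
  set ct : ℂ := -(2 * (μ t : ℂ) * z t) with hctdef
  set h : ℂ → ℂ :=
    fun ζ => -(μ s : ℂ) + ∑ j ∈ Finset.univ.erase s, (μ j : ℂ) * (z j + ζ) / (z j - ζ) with hhdef
  set ht : ℂ → ℂ :=
    fun w => -(μ t : ℂ) + ∑ j ∈ Finset.univ.erase t, (μ j : ℂ) * (z j + w) / (z j - w) with htdef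
  -- decomposition of F near z s
  have hFdec : ∀ ζ : ℂ, ζ ≠ z s → F ζ = c / (ζ - z s) + h ζ := by
    intro ζ hζ
    have h1 : z s - ζ ≠ 0 := sub_ne_zero.2 (Ne.symm hζ)
    have h2 : ζ - z s ≠ 0 := sub_ne_zero.2 hζ
    rw [hF, ← Finset.add_sum_erase _ _ (Finset.mem_univ s), hhdef]
    have hmain : (μ s : ℂ) * (z s + ζ) / (z s - ζ) = c / (ζ - z s) + -(μ s : ℂ) := by
      rw [hcdef]; field_simp; ring
    rw [hmain]; ring
  -- decomposition of F near z t
  have hFdect : ∀ w : ℂ, w ≠ z t → F w = ct / (w - z t) + ht w := by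
    intro w hw
    have h1 : z t - w ≠ 0 := sub_ne_zero.2 (Ne.symm hw)
    have h2 : w - z t ≠ 0 := sub_ne_zero.2 hw
    rw [hF, ← Finset.add_sum_erase _ _ (Finset.mem_univ t), htdef]
    have hmain : (μ t : ℂ) * (z t + w) / (z t - w) = ct / (w - z t) + -(μ t : ℂ) := by
      rw [hctdef]; field_simp; ring
    rw [hmain]; ring
  -- differentiability of h on the closed ball around z s
  have hdiff_h : ∀ ζ0 ∈ closedBall (z s) δ, DifferentiableAt ℂ h ζ0 := by
    intro ζ0 hζ0
    rw [hhdef]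
    apply (differentiableAt_const _).add
    apply DifferentiableAt.fun_sum
    intro j hj
    have hjne : j ≠ s := Finset.ne_of_mem_erase hj
    have hne : z j - ζ0 ≠ 0 :=
      sub_ne_zero.2 (fun he => hzj_s j hjne (by rw [he]; exact hζ0))
    exact ((differentiableAt_const _).mul
      ((differentiableAt_const _).add differentiableAt_id)).div
      ((differentiableAt_const _).sub differentiableAt_id) hne
  have hdiff_ht : ∀ w0 ∈ closedBall (z t) ε, DifferentiableAt ℂ ht w0 := by
    intro w0 hw0
    rw [htdef]
    apply (differentiableAt_const _).add
    apply DifferentiableAt.fun_sum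
    intro j hj
    have hjne : j ≠ t := Finset.ne_of_mem_erase hj
    have hne : z j - w0 ≠ 0 :=
      sub_ne_zero.2 (fun he => hzj_t j hjne (by rw [he]; exact hw0))
    exact ((differentiableAt_const _).mul
      ((differentiableAt_const _).add differentiableAt_id)).div
      ((differentiableAt_const _).sub differentiableAt_id) hne
  -- inner integral
  have key_inner : ∀ w ∈ sphere (z t) ε,
      (∮ ζ in C(z s, δ), (ζ - z s) * (w - z t) * G ζ w)
        = (Complex.I * (w - z t) * c ^ 2 * (F w - (z s + w) / (z s - w)))
          * (2 * (Real.pi : ℂ) * Complex.I) := by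
    intro w hw
    have hwcb : w ∈ closedBall (z t) ε := sphere_subset_closedBall hw
    have hwnotin : w ∉ closedBall (z s) δ := fun hm => Set.disjoint_left.1 hdisj hm hwcb
    have hzsw : z s - w ≠ 0 := sub_ne_zero.2 (fun he => hwnotin (he ▸ hzs_s))
    set Rw : ℂ := Complex.I * (w - z t) * c ^ 2 * (F w - (z s + w) / (z s - w)) with hRw
    set Hw : ℂ → ℂ := fun ζ =>
      Complex.I * (w - z t) * (c * (h ζ * F w - 1) + c * F w * (h ζ - F w)
        + (ζ - z s) * (h ζ - F w) * (h ζ * F w - 1)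
        - 2 * c * ((ζ + w) / (ζ - w)) * (h ζ - F w)
        - (ζ - z s) * ((ζ + w) / (ζ - w)) * (h ζ - F w) ^ 2
        + 2 * c ^ 2 * w / ((ζ - w) * (z s - w))) with hHwdef
    have hnw : ∀ ζ0 ∈ closedBall (z s) δ, ζ0 - w ≠ 0 := by
      intro ζ0 hζ0
      exact sub_ne_zero.2 (fun he => hwnotin (he ▸ hζ0))
    -- the algebraic identity on the sphere
    have hEq : Set.EqOn (fun ζ => (ζ - z s) * (w - z t) * G ζ w)
        (fun ζ => Rw * (ζ - z s)⁻¹ + Hw ζ) (sphere (z s) δ) := by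
      intro ζ hζ
      have hζcb : ζ ∈ closedBall (z s) δ := sphere_subset_closedBall hζ
      have hζs : ζ ≠ z s := ne_of_mem_sphere hζ hδ.ne'
      have h2 : ζ - z s ≠ 0 := sub_ne_zero.2 hζs
      have hζw : ζ - w ≠ 0 := hnw ζ hζcb
      simp only [hG, hHwdef, hRw]
      rw [hFdec ζ hζs]
      exact key_identity6 ζ w (z s) (z t) c (h ζ) (F w) h2 hζw hzsw
    have hHwdiff : ∀ ζ0 ∈ closedBall (z s) δ, DifferentiableAt ℂ Hw ζ0 := by
      intro ζ0 hζ0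
      have hh0 : DifferentiableAt ℂ h ζ0 := hdiff_h ζ0 hζ0
      have hw0 : ζ0 - w ≠ 0 := hnw ζ0 hζ0
      have hden : (ζ0 - w) * (z s - w) ≠ 0 := mul_ne_zero hw0 hzsw
      rw [hHwdef]
      apply (differentiableAt_const _).mul
      have hq : DifferentiableAt ℂ (fun ζ => (ζ + w) / (ζ - w)) ζ0 :=
        (differentiableAt_id.add_const _).div (differentiableAt_id.sub_const _) hw0
      have hid : DifferentiableAt ℂ (fun ζ : ℂ => ζ - z s) ζ0 := differentiableAt_id.sub_const _
      have hA : DifferentiableAt ℂ (fun ζ => h ζ - F w) ζ0 := hh0.sub_const _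
      have hB : DifferentiableAt ℂ (fun ζ => h ζ * F w - 1) ζ0 :=
        (hh0.mul_const _).sub_const _
      have hlast : DifferentiableAt ℂ (fun ζ => 2 * c ^ 2 * w / ((ζ - w) * (z s - w))) ζ0 :=
        (differentiableAt_const _).div
          ((differentiableAt_id.sub_const _).mul (differentiableAt_const _)) hden
      have e1 : DifferentiableAt ℂ (fun ζ => c * (h ζ * F w - 1)) ζ0 :=
        (differentiableAt_const _).mul hB
      have e2 : DifferentiableAt ℂ (fun ζ => c * F w * (h ζ - F w)) ζ0 :=
        (differentiableAt_const _).mul hA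
      have e3 : DifferentiableAt ℂ (fun ζ => (ζ - z s) * (h ζ - F w) * (h ζ * F w - 1)) ζ0 :=
        (hid.mul hA).mul hB
      have e4 : DifferentiableAt ℂ (fun ζ => 2 * c * ((ζ + w) / (ζ - w)) * (h ζ - F w)) ζ0 :=
        ((differentiableAt_const _).mul hq).mul hA
      have e5 : DifferentiableAt ℂ
          (fun ζ => (ζ - z s) * ((ζ + w) / (ζ - w)) * (h ζ - F w) ^ 2) ζ0 :=
        (hid.mul hq).mul (hA.pow 2)
      exact ((((e1.add e2).add e3).sub e4).sub e5).add hlast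
    have hHwcont : ContinuousOn Hw (closedBall (z s) δ) :=
      fun ζ0 hζ0 => (hHwdiff ζ0 hζ0).continuousAt.continuousWithinAt
    have hHwzero : (∮ ζ in C(z s, δ), Hw ζ) = 0 :=
      circleIntegral_eq_zero_of_differentiable_on_off_countable hδ.le Set.countable_empty
        hHwcont (fun ζ0 hζ0 => hHwdiff ζ0 (ball_subset_closedBall hζ0.1))
    have hfcont : ContinuousOn (fun ζ => Rw * (ζ - z s)⁻¹ + Hw ζ) (sphere (z s) δ) := by
      apply ContinuousOn.add
      · apply continuousOn_const.mul
        apply ContinuousOn.inv₀ (continuousOn_id.sub continuousOn_const)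
        intro ζ0 hζ0
        exact sub_ne_zero.2 (ne_of_mem_sphere hζ0 hδ.ne')
      · exact hHwcont.mono sphere_subset_closedBall
    have hfint : CircleIntegrable (fun ζ => Rw * (ζ - z s)⁻¹ + Hw ζ) (z s) δ :=
      ContinuousOn.circleIntegrable hδ.le hfcont
    have hHint : CircleIntegrable Hw (z s) δ :=
      ContinuousOn.circleIntegrable hδ.le (hHwcont.mono sphere_subset_closedBall)
    have hsub := circleIntegral.integral_sub hfint hHint
    have hsimp : (fun ζ => Rw * (ζ - z s)⁻¹ + Hw ζ - Hw ζ) = fun ζ => Rw * (ζ - z s)⁻¹ := by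
      funext ζ; ring
    rw [hsimp] at hsub
    have hginv : (∮ ζ in C(z s, δ), Rw * (ζ - z s)⁻¹) = Rw * (2 * (Real.pi : ℂ) * Complex.I) := by
      rw [circleIntegral.integral_const_mul,
        circleIntegral.integral_sub_inv_of_mem_ball (mem_ball_self hδ)]
    rw [circleIntegral.integral_congr hδ.le hEq]
    have : (∮ ζ in C(z s, δ), (Rw * (ζ - z s)⁻¹ + Hw ζ))
        = Rw * (2 * (Real.pi : ℂ) * Complex.I) + (∮ ζ in C(z s, δ), Hw ζ) := by
      rw [← hginv]
      rw [hsub]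
      ring
    rw [this, hHwzero, add_zero]
  -- outer integral
  have key_outer : (∮ w in C(z t, ε), ∮ ζ in C(z s, δ), (ζ - z s) * (w - z t) * G ζ w) = 0 := by
    have hcongr1 : Set.EqOn (fun w => ∮ ζ in C(z s, δ), (ζ - z s) * (w - z t) * G ζ w)
        (fun w => (Complex.I * (w - z t) * c ^ 2 * (F w - (z s + w) / (z s - w)))
          * (2 * (Real.pi : ℂ) * Complex.I)) (sphere (z t) ε) := fun w hw => key_inner w hw
    rw [circleIntegral.integral_congr hε.le hcongr1]
    set S' : ℂ → ℂ := fun w =>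
      (Complex.I * c ^ 2 * (ct + (w - z t) * ht w - (w - z t) * ((z s + w) / (z s - w))))
        * (2 * (Real.pi : ℂ) * Complex.I) with hS'def
    have hnzs : ∀ w0 ∈ closedBall (z t) ε, z s - w0 ≠ 0 := by
      intro w0 hw0
      exact sub_ne_zero.2 (fun he => Set.disjoint_left.1 hdisj hzs_s (he ▸ hw0))
    have hcongr2 : Set.EqOn (fun w => (Complex.I * (w - z t) * c ^ 2
        * (F w - (z s + w) / (z s - w))) * (2 * (Real.pi : ℂ) * Complex.I))
        S' (sphere (z t) ε) := by
      intro w hw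
      have hwt : w ≠ z t := ne_of_mem_sphere hw hε.ne'
      have h2 : w - z t ≠ 0 := sub_ne_zero.2 hwt
      have h3 : z s - w ≠ 0 := hnzs w (sphere_subset_closedBall hw)
      simp only [hS'def]
      rw [hFdect w hwt]
      exact key_identity6t w (z s) (z t) ct c (ht w) _ h2 h3
    rw [circleIntegral.integral_congr hε.le hcongr2]
    have hS'diff : ∀ w0 ∈ closedBall (z t) ε, DifferentiableAt ℂ S' w0 := by
      intro w0 hw0
      have hht0 : DifferentiableAt ℂ ht w0 := hdiff_ht w0 hw0
      have h3 : z s - w0 ≠ 0 := hnzs w0 hw0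
      rw [hS'def]
      apply DifferentiableAt.mul _ (differentiableAt_const _)
      apply (differentiableAt_const _).mul
      have hq : DifferentiableAt ℂ (fun w => (z s + w) / (z s - w)) w0 :=
        ((differentiableAt_const _).add differentiableAt_id).div
          ((differentiableAt_const _).sub differentiableAt_id) h3
      exact (((differentiableAt_const _).add
        ((differentiableAt_id.sub_const _).mul hht0)).sub
        ((differentiableAt_id.sub_const _).mul hq))
    exact circleIntegral_eq_zero_of_differentiable_on_off_countable hε.le Set.countable_empty
      (fun w0 hw0 => (hS'diff w0 hw0).continuousAt.continuousWithinAt)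
      (fun w0 hw0 => hS'diff w0 (ball_subset_closedBall hw0.1))
  rw [key_outer, mul_zero]
end

section
/- Let n ≥ 1, let z₁,…,z_n be distinct points on the unit circle in ℂ, and let μ₁,…,μ_n ∈ (0,1) with μ₁+⋯+μ_n = 1. Define F(z) := Σ_{j=1}^n μ_j (z_j+z)/(z_j−z) and G(z,w) := i(F(z)−F(w))(F(z)F(w)−1) − i((z+w)/(z−w))(F(z)−F(w))². Let 1 ≤ s, t ≤ n and let δ, ε > 0 be small enough that each closed disk (radius δ around z_s for the z-variable, radius ε around z_t for the w-variable) contains exactly one of the points z₁,…,z_n; if s ≠ t assume the two closed disks are disjoint, and if s = t assume δ < ε (nested contours, integrating in z over the inner circle first). Then (1/(2πi)²) ∮_{|w−z_t|=ε} ∮_{|z−z_s|=δ} (z−z_s) G(z,w) dz dw = 8i z_s² z_t μ_s μ_t (δ_{st} − μ_s), where δ_{st} is the Kronecker delta. Equivalently, {z_s, μ_t} = 2i z_s μ_t (δ_{st} − μ_s). -/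
open Complex Metric

open circleIntegral in
/-- If `f` agrees on the circle with `c₁ * (ζ - p)⁻¹ + g ζ` where `p` is inside and `g`
is differentiable on the closed disk, then `∮ f = 2πi c₁`. -/
lemma s7_residue_key {c p : ℂ} {R : ℝ} (hR : 0 < R) (hp : p ∈ ball c R) (f g : ℂ → ℂ) (c₁ : ℂ)
    (heq : ∀ ζ ∈ sphere c R, f ζ = c₁ * (ζ - p)⁻¹ + g ζ)
    (hgd : ∀ ζ ∈ closedBall c R, DifferentiableAt ℂ g ζ) :
    (∮ ζ in C(c, R), f ζ) = 2 * Real.pi * Complex.I * c₁ := by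
  have hpn : p ∉ sphere c R := by
    simp only [mem_sphere]
    exact ne_of_lt (mem_ball.1 hp)
  have hne : ∀ ζ ∈ sphere c R, ζ - p ≠ 0 := fun ζ hζ =>
    sub_ne_zero.2 (ne_of_mem_of_not_mem hζ hpn)
  have hι1 : CircleIntegrable (fun ζ => c₁ * (ζ - p)⁻¹) c R := by
    refine ContinuousOn.circleIntegrable hR.le ?_
    exact continuousOn_const.mul (((continuousOn_id).sub continuousOn_const).inv₀ hne)
  have hgc : ContinuousOn g (closedBall c R) := fun ζ hζ =>
    (hgd ζ hζ).continuousAt.continuousWithinAt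
  have hι2 : CircleIntegrable g c R :=
    (hgc.mono sphere_subset_closedBall).circleIntegrable hR.le
  have hι2' : CircleIntegrable (fun ζ => -g ζ) c R := hι2.neg
  calc (∮ ζ in C(c, R), f ζ) = ∮ ζ in C(c, R), (c₁ * (ζ - p)⁻¹ - (-g ζ)) := by
        refine integral_congr hR.le fun ζ hζ => ?_
        rw [heq ζ hζ]; ring
    _ = (∮ ζ in C(c, R), c₁ * (ζ - p)⁻¹) - ∮ ζ in C(c, R), -g ζ :=
        integral_sub hι1 hι2'
    _ = c₁ * (2 * Real.pi * Complex.I) - 0 := by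
        rw [integral_const_mul, integral_sub_inv_of_mem_ball hp,
          show (∮ ζ in C(c, R), -g ζ) = ∮ ζ in C(c, R), (-g) ζ from rfl,
          Complex.circleIntegral_eq_zero_of_differentiable_on_off_countable hR.le
            Set.countable_empty (hgc.neg) (fun ζ hζ => (hgd ζ (ball_subset_closedBall hζ.1)).neg)]
    _ = 2 * Real.pi * Complex.I * c₁ := by ring

set_option maxHeartbeats 2000000 in
/-- For the Carathéodory function `F` of a probability measure supported
at `n` distinct points of the unit circle, and
`G(z,w) = i(F(z)−F(w))(F(z)F(w)−1) − i((z+w)/(z−w))(F(z)−F(w))²` the Gelfand–Dikij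
bracket `{F(z),F(w)}_GD`, the double residue extracting `{z_s,μ_t}` gives
`(1/(2πi)²) ∮_{|w−z_t|=ε} ∮_{|z−z_s|=δ} (z−z_s) G(z,w) dz dw
  = 8i z_s² z_t μ_s μ_t (δ_{st} − μ_s)`,
i.e. `{z_s, μ_t} = 2i z_s μ_t (δ_{st} − μ_s)`. -/
theorem statement7 (n : ℕ) (hn : 1 ≤ n) (z : Fin n → ℂ) (μ : Fin n → ℝ)
    (hz : ∀ j, ‖z j‖ = 1) (hinj : Function.Injective z)
    (hμ : ∀ j, μ j ∈ Set.Ioo (0 : ℝ) 1) (hsum : ∑ j, μ j = 1)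
    (F : ℂ → ℂ) (hF : ∀ ζ, F ζ = ∑ j, (μ j : ℂ) * (z j + ζ) / (z j - ζ))
    (G : ℂ → ℂ → ℂ)
    (hG : ∀ ζ ω, G ζ ω = Complex.I * (F ζ - F ω) * (F ζ * F ω - 1) -
      Complex.I * ((ζ + ω) / (ζ - ω)) * (F ζ - F ω) ^ 2)
    (s t : Fin n) (δ ε : ℝ) (hδ : 0 < δ) (hε : 0 < ε)
    (hone_s : ∀ j, z j ∈ closedBall (z s) δ ↔ j = s)
    (hone_t : ∀ j, z j ∈ closedBall (z t) ε ↔ j = t)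
    (hdisj : s ≠ t → Disjoint (closedBall (z s) δ) (closedBall (z t) ε))
    (hnest : s = t → δ < ε) :
    (1 / (2 * (Real.pi : ℂ) * Complex.I)) ^ 2 *
      (∮ w in C(z t, ε), ∮ ζ in C(z s, δ), (ζ - z s) * G ζ w) =
    8 * Complex.I * (z s) ^ 2 * z t * (μ s : ℂ) * (μ t : ℂ) *
      ((if s = t then 1 else 0) - (μ s : ℂ)) := by
  have hπ : (Real.pi : ℂ) ≠ 0 := Complex.ofReal_ne_zero.2 Real.pi_ne_zero
  have hT : (2 * (Real.pi : ℂ) * Complex.I) ≠ 0 := by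
    simp [hπ, Complex.I_ne_zero]
  -- partial fraction decomposition of `F` at a pole
  have hdecomp : ∀ (k : Fin n) (ζ : ℂ), ζ ≠ z k →
      F ζ = (-2 * z k * (μ k : ℂ)) * (ζ - z k)⁻¹ +
        ((∑ j ∈ Finset.univ.erase k, (μ j : ℂ) * (z j + ζ) / (z j - ζ)) - (μ k : ℂ)) := by
    intro k ζ hζ
    rw [hF, ← Finset.add_sum_erase _ _ (Finset.mem_univ k)]
    have h1 : z k - ζ ≠ 0 := sub_ne_zero.2 (Ne.symm hζ)
    have h2 : ζ - z k ≠ 0 := sub_ne_zero.2 hζ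
    field_simp
    ring
  -- differentiability of the regular part
  have hHdiff : ∀ (k : Fin n) (ζ : ℂ), (∀ j : Fin n, j ≠ k → ζ ≠ z j) →
      DifferentiableAt ℂ
        (fun ξ => (∑ j ∈ Finset.univ.erase k, (μ j : ℂ) * (z j + ξ) / (z j - ξ)) - (μ k : ℂ))
        ζ := by
    intro k ζ h
    apply DifferentiableAt.sub_const
    apply DifferentiableAt.fun_sum
    intro j hj
    have hj' : j ≠ k := Finset.ne_of_mem_erase hj
    have hne : z j - ζ ≠ 0 := sub_ne_zero.2 (Ne.symm (h j hj'))
    exact ((differentiableAt_const _).mul ((differentiableAt_const _).add differentiableAt_fun_id)).div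
      ((differentiableAt_const _).sub differentiableAt_fun_id) hne
  -- points of the outer circle avoid the inner closed disk
  have hzsW : ∀ w ∈ sphere (z t) ε, w ∉ closedBall (z s) δ := by
    intro w hw
    by_cases hst : s = t
    · subst hst
      intro hmem
      rw [mem_sphere] at hw
      rw [mem_closedBall] at hmem
      have := hnest rfl
      rw [hw] at hmem
      linarith
    · exact fun hmem =>
        Set.disjoint_left.1 (hdisj hst) hmem (sphere_subset_closedBall hw)
  -- the inner contour integral
  have hinner : ∀ w ∈ sphere (z t) ε,
      (∮ ζ in C(z s, δ), (ζ - z s) * G ζ w) =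
        2 * Real.pi * Complex.I *
          (Complex.I * (-2 * z s * (μ s : ℂ)) ^ 2 * (F w - (z s + w) / (z s - w))) := by
    intro w hw
    have hwcb : w ∉ closedBall (z s) δ := hzsW w hw
    have hza : ∀ ζ ∈ closedBall (z s) δ, ζ - w ≠ 0 := fun ζ hζ =>
      sub_ne_zero.2 (ne_of_mem_of_not_mem hζ hwcb)
    have hzsw : z s - w ≠ 0 := hza (z s) (mem_closedBall_self hδ.le)
    apply s7_residue_key hδ (mem_ball_self hδ) _
      (fun ζ => Complex.I * (2 * (-2 * z s * (μ s : ℂ)) * F w *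
            ((∑ j ∈ Finset.univ.erase s, (μ j : ℂ) * (z j + ζ) / (z j - ζ)) - (μ s : ℂ))
          + (ζ - z s) * F w *
            ((∑ j ∈ Finset.univ.erase s, (μ j : ℂ) * (z j + ζ) / (z j - ζ)) - (μ s : ℂ)) ^ 2
          - (-2 * z s * (μ s : ℂ))
          - (ζ - z s) *
            ((∑ j ∈ Finset.univ.erase s, (μ j : ℂ) * (z j + ζ) / (z j - ζ)) - (μ s : ℂ))
          - (-2 * z s * (μ s : ℂ)) * (F w) ^ 2
          - (ζ - z s) *
            ((∑ j ∈ Finset.univ.erase s, (μ j : ℂ) * (z j + ζ) / (z j - ζ)) - (μ s : ℂ)) * (F w) ^ 2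
          + (ζ - z s) * F w)
        + Complex.I * (-2 * z s * (μ s : ℂ)) ^ 2 * (2 * w / ((ζ - w) * (z s - w)))
        - Complex.I * ((ζ + w) / (ζ - w)) * (2 * (-2 * z s * (μ s : ℂ)) *
            ((∑ j ∈ Finset.univ.erase s, (μ j : ℂ) * (z j + ζ) / (z j - ζ)) - (μ s : ℂ))
          + (ζ - z s) *
            ((∑ j ∈ Finset.univ.erase s, (μ j : ℂ) * (z j + ζ) / (z j - ζ)) - (μ s : ℂ)) ^ 2
          - 2 * (-2 * z s * (μ s : ℂ)) * F w
          - 2 * (ζ - z s) * F w *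
            ((∑ j ∈ Finset.univ.erase s, (μ j : ℂ) * (z j + ζ) / (z j - ζ)) - (μ s : ℂ))
          + (ζ - z s) * (F w) ^ 2))
    · -- equality on the circle
      intro ζ hζ
      have hζs : ζ ≠ z s := by
        intro h
        rw [mem_sphere, h] at hζ
        simp at hζ
        exact hδ.ne' hζ.symm
      have h2 : ζ - z s ≠ 0 := sub_ne_zero.2 hζs
      have h3 : ζ - w ≠ 0 := hza ζ (sphere_subset_closedBall hζ)
      rw [hG ζ w, hdecomp s ζ hζs]
      field_simp
      ring
    · -- `g` is differentiable on the closed disk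
      intro ζ hζ
      have h3 : ζ - w ≠ 0 := hza ζ hζ
      have hH : DifferentiableAt ℂ
          (fun ξ => (∑ j ∈ Finset.univ.erase s, (μ j : ℂ) * (z j + ξ) / (z j - ξ)) - (μ s : ℂ))
          ζ := by
        refine hHdiff s ζ (fun j hj h => hj ?_)
        exact (hone_s j).1 (h ▸ hζ)
      have h4 : (ζ - w) * (z s - w) ≠ 0 := mul_ne_zero h3 hzsw
      fun_prop (disch := assumption)
  by_cases hst : s = t
  · -- case `s = t`
    subst hst
    have hws : ∀ w ∈ sphere (z s) ε, w ≠ z s := by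
      intro w hw h
      rw [mem_sphere, h] at hw
      simp at hw
      exact hε.ne' hw.symm
    have houter : (∮ w in C(z s, ε), ∮ ζ in C(z s, δ), (ζ - z s) * G ζ w) =
        2 * Real.pi * Complex.I * (2 * Real.pi * Complex.I *
          (Complex.I * (-2 * z s * (μ s : ℂ)) ^ 2 * ((-2 * z s * (μ s : ℂ)) + 2 * z s))) := by
      apply s7_residue_key hε (mem_ball_self hε) _
        (fun w => 2 * Real.pi * Complex.I * (Complex.I * (-2 * z s * (μ s : ℂ)) ^ 2 *
          (((∑ j ∈ Finset.univ.erase s, (μ j : ℂ) * (z j + w) / (z j - w)) - (μ s : ℂ)) + 1)))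
      · intro w hw
        have h2 : w - z s ≠ 0 := sub_ne_zero.2 (hws w hw)
        have hzsw : z s - w ≠ 0 := sub_ne_zero.2 (Ne.symm (hws w hw))
        rw [hinner w hw, hdecomp s w (hws w hw)]
        field_simp
        ring
      · intro w hw
        have hH : DifferentiableAt ℂ
            (fun ξ => (∑ j ∈ Finset.univ.erase s, (μ j : ℂ) * (z j + ξ) / (z j - ξ)) - (μ s : ℂ))
            w := by
          refine hHdiff s w (fun j hj h => hj ?_)
          exact (hone_t j).1 (h ▸ hw)
        fun_prop (disch := assumption)
    rw [houter, if_pos rfl]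
    field_simp
    ring
  · -- case `s ≠ t`
    have hzscb : z s ∉ closedBall (z t) ε := fun h =>
      Set.disjoint_left.1 (hdisj hst) (mem_closedBall_self hδ.le) h
    have hwt : ∀ w ∈ sphere (z t) ε, w ≠ z t := by
      intro w hw h
      rw [mem_sphere, h] at hw
      simp at hw
      exact hε.ne' hw.symm
    have houter : (∮ w in C(z t, ε), ∮ ζ in C(z s, δ), (ζ - z s) * G ζ w) =
        2 * Real.pi * Complex.I * (2 * Real.pi * Complex.I *
          (Complex.I * (-2 * z s * (μ s : ℂ)) ^ 2 * (-2 * z t * (μ t : ℂ)))) := by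
      apply s7_residue_key hε (mem_ball_self hε) _
        (fun w => 2 * Real.pi * Complex.I * (Complex.I * (-2 * z s * (μ s : ℂ)) ^ 2 *
          (((∑ j ∈ Finset.univ.erase t, (μ j : ℂ) * (z j + w) / (z j - w)) - (μ t : ℂ)) +
            2 * z s / (w - z s) + 1)))
      · intro w hw
        have h2 : w - z t ≠ 0 := sub_ne_zero.2 (hwt w hw)
        have hws : w - z s ≠ 0 := sub_ne_zero.2
          (ne_of_mem_of_not_mem (sphere_subset_closedBall hw) hzscb)
        have hzsw : z s - w ≠ 0 := by
          intro h
          exact hws (by linear_combination -h)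
        rw [hinner w hw, hdecomp t w (hwt w hw)]
        field_simp
        ring
      · intro w hw
        have hH : DifferentiableAt ℂ
            (fun ξ => (∑ j ∈ Finset.univ.erase t, (μ j : ℂ) * (z j + ξ) / (z j - ξ)) - (μ t : ℂ))
            w := by
          refine hHdiff t w (fun j hj h => hj ?_)
          exact (hone_t j).1 (h ▸ hw)
        have hws : w - z s ≠ 0 := sub_ne_zero.2 (ne_of_mem_of_not_mem hw hzscb)
        fun_prop (disch := assumption)
    rw [houter, if_neg hst]
    field_simp
    ring
end

section
/- Let n ≥ 1 and let U := {(θ₁,…,θ_n, m₁,…,m_n) ∈ ℝⁿ × ℝⁿ : m_j > 0 for all j, and θ_s − θ_t ∉ 2πℤ for all s ≠ t}, with the bracket {f,g} := Σ_{s} 2 m_s (∂f/∂θ_s ∂g/∂m_s − ∂f/∂m_s ∂g/∂θ_s) + Σ_{s<t} 2 m_s m_t cot((θ_s−θ_t)/2) (∂f/∂m_s ∂g/∂m_t − ∂f/∂m_t ∂g/∂m_s). For 1 ≤ s ≤ n define q_s : U → ℝ by q_s := m_s · Π_{j≠s} |e^{iθ_s} − e^{iθ_j}|. Then for all 1 ≤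 s, t ≤ n: {θ_s, q_t} = 2 q_t δ_{st} and {q_s, q_t} = 0. In particular, θ₁,…,θ_n, (1/2)log q₁,…,(1/2)log q_n are canonical coordinates for this Poisson structure. -/
open Real

/-- Partial derivative in the `θ_s` direction. -/
noncomputable def pTheta {n : ℕ} (f : (Fin n → ℝ) × (Fin n → ℝ) → ℝ) (s : Fin n)
    (p : (Fin n → ℝ) × (Fin n → ℝ)) : ℝ :=
  fderiv ℝ f p (Pi.single s 1, 0)

/-- Partial derivative in the `m_s` direction. -/
noncomputable def pM {n : ℕ} (f : (Fin n → ℝ) × (Fin n → ℝ) → ℝ) (s : Fin n)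
    (p : (Fin n → ℝ) × (Fin n → ℝ)) : ℝ :=
  fderiv ℝ f p (0, Pi.single s 1)

/-- The extended Poisson bracket on finite measures `Σ m_j δ_{exp(iθ_j)}`. -/
noncomputable def pbr {n : ℕ} (f g : (Fin n → ℝ) × (Fin n → ℝ) → ℝ)
    (p : (Fin n → ℝ) × (Fin n → ℝ)) : ℝ :=
  (∑ s, 2 * p.2 s * (pTheta f s p * pM g s p - pM f s p * pTheta g s p)) +
  ∑ s, ∑ t, if s < t then
    2 * p.2 s * p.2 t * Real.cot ((p.1 s - p.1 t) / 2) *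
      (pM f s p * pM g t p - pM f t p * pM g s p)
  else 0

/-- The phase space: all weights positive, all angles distinct mod `2π`. -/
def U (n : ℕ) : Set ((Fin n → ℝ) × (Fin n → ℝ)) :=
  {p | (∀ j, 0 < p.2 j) ∧
    ∀ s t : Fin n, s ≠ t → ∀ k : ℤ, p.1 s - p.1 t ≠ 2 * Real.pi * k}

/-- The canonical weight `q_s = m_s · Π_{j≠s} |exp(iθ_s) − exp(iθ_j)|`. -/
noncomputable def qCoord {n : ℕ} (s : Fin n) (p : (Fin n → ℝ) × (Fin n → ℝ)) : ℝ :=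
  p.2 s * ∏ j ∈ Finset.univ.erase s,
    ‖Complex.exp ((p.1 s : ℂ) * Complex.I) -
      Complex.exp ((p.1 j : ℂ) * Complex.I)‖

noncomputable def Fd (u : ℝ) : ℝ := Real.sqrt (2 - 2 * Real.cos u)

lemma abs_exp_sub (a b : ℝ) :
    ‖Complex.exp ((a:ℂ) * Complex.I) - Complex.exp ((b:ℂ) * Complex.I)‖ = Fd (a - b) := by
  rw [Complex.norm_def, Complex.normSq_apply, Fd]
  simp only [Complex.sub_re, Complex.sub_im, Complex.exp_ofReal_mul_I_re,
    Complex.exp_ofReal_mul_I_im]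
  congr 1
  have h1 := Real.cos_sub a b
  have h2 := Real.sin_sq_add_cos_sq a
  have h3 := Real.sin_sq_add_cos_sq b
  nlinarith [h1, h2, h3]

lemma cos_ne_one_of {u : ℝ} (h : ∀ k : ℤ, u ≠ 2 * Real.pi * k) : Real.cos u ≠ 1 := by
  intro hc
  obtain ⟨k, hk⟩ := (Real.cos_eq_one_iff u).1 hc
  exact h k (by linarith)

lemma Fd_pos {u : ℝ} (h : Real.cos u ≠ 1) : 0 < Fd u :=
  Real.sqrt_pos.2 (by have := lt_of_le_of_ne (Real.cos_le_one u) h; linarith)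

lemma sin_half_ne_zero {u : ℝ} (h : Real.cos u ≠ 1) : Real.sin (u / 2) ≠ 0 := by
  intro h0
  have habs := Real.abs_sin_half u
  rw [h0, abs_zero] at habs
  have : (1 - Real.cos u) / 2 ≤ 0 := by
    by_contra hpos
    push_neg at hpos
    exact absurd habs.symm (ne_of_gt (Real.sqrt_pos.2 hpos))
  exact h (le_antisymm (Real.cos_le_one u) (by linarith))

lemma hasDerivAt_Fd {u : ℝ} (h : Real.cos u ≠ 1) :
    HasDerivAt Fd (1 / 2 * Real.cot (u / 2) * Fd u) u := by
  have h2 : (0:ℝ) < 2 - 2 * Real.cos u := by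
    have := lt_of_le_of_ne (Real.cos_le_one u) h; linarith
  have hd : HasDerivAt (fun u => 2 - 2 * Real.cos u) (2 * Real.sin u) u := by
    simpa [mul_comm] using ((Real.hasDerivAt_cos u).const_mul 2).const_sub 2
  have := (Real.hasDerivAt_sqrt h2.ne').comp u hd
  refine this.congr_deriv ?_
  symm
  have hF : Fd u = Real.sqrt (2 - 2 * Real.cos u) := rfl
  have hFpos : 0 < Fd u := Fd_pos h
  have hsq : Fd u ^ 2 = 2 - 2 * Real.cos u := by
    rw [hF]; exact Real.sq_sqrt h2.le
  have hs : Real.sin (u / 2) ≠ 0 := sin_half_ne_zero h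
  have hsin : Real.sin u = 2 * Real.sin (u / 2) * Real.cos (u / 2) := by
    have := Real.sin_two_mul (u / 2)
    rw [show 2 * (u / 2) = u by ring] at this
    linarith
  have hcos : Real.cos u = 1 - 2 * Real.sin (u / 2) ^ 2 := by
    have h2' := Real.sin_sq_add_cos_sq (u / 2)
    have := Real.cos_two_mul (u / 2)
    rw [show 2 * (u / 2) = u by ring] at this
    nlinarith
  rw [Real.cot_eq_cos_div_sin, ← hF]
  field_simp
  linear_combination (Real.cos (u/2))*hsq - (2*Real.sin (u/2))*hsin - (2*Real.cos (u/2))*hcos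


noncomputable def Ad {n : ℕ} (t : Fin n) (θ : Fin n → ℝ) : ℝ :=
  ∏ j ∈ Finset.univ.erase t, Fd (θ t - θ j)

lemma qCoord_eq {n : ℕ} (t : Fin n) (p : (Fin n → ℝ) × (Fin n → ℝ)) :
    qCoord t p = p.2 t * Ad t p.1 := by
  unfold qCoord Ad
  rw [Finset.prod_congr rfl fun j _ => abs_exp_sub _ _]

noncomputable def Gmap (n : ℕ) (t j : Fin n) :
    ((Fin n → ℝ) × (Fin n → ℝ)) →L[ℝ] ℝ :=
  ((ContinuousLinearMap.proj t : (Fin n → ℝ) →L[ℝ] ℝ) -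
    ContinuousLinearMap.proj j).comp (ContinuousLinearMap.fst ℝ (Fin n → ℝ) (Fin n → ℝ))

noncomputable def Mmap (n : ℕ) (t : Fin n) :
    ((Fin n → ℝ) × (Fin n → ℝ)) →L[ℝ] ℝ :=
  (ContinuousLinearMap.proj t : (Fin n → ℝ) →L[ℝ] ℝ).comp
    (ContinuousLinearMap.snd ℝ (Fin n → ℝ) (Fin n → ℝ))

lemma cos_ne_one_U {n : ℕ} {p : (Fin n → ℝ) × (Fin n → ℝ)} (hp : p ∈ U n)
    {t j : Fin n} (h : j ≠ t) : Real.cos (p.1 t - p.1 j) ≠ 1 :=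
  cos_ne_one_of (hp.2 t j h.symm)

lemma hasFDerivAt_qCoord {n : ℕ} (t : Fin n) (p : (Fin n → ℝ) × (Fin n → ℝ))
    (hp : p ∈ U n) :
    HasFDerivAt (qCoord t)
      (p.2 t • (∑ j ∈ Finset.univ.erase t,
          (∏ k ∈ (Finset.univ.erase t).erase j, Fd (p.1 t - p.1 k)) •
            ((1 / 2 * Real.cot ((p.1 t - p.1 j) / 2) * Fd (p.1 t - p.1 j)) • Gmap n t j))
        + Ad t p.1 • Mmap n t) p := by
  have hfun : qCoord t = fun p : (Fin n → ℝ) × (Fin n → ℝ) =>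
      p.2 t * ∏ j ∈ Finset.univ.erase t, Fd (p.1 t - p.1 j) :=
    funext fun p => qCoord_eq t p
  rw [hfun]
  have hM : HasFDerivAt (fun p : (Fin n → ℝ) × (Fin n → ℝ) => p.2 t) (Mmap n t) p :=
    (hasFDerivAt_apply (𝕜 := ℝ) t p.2).comp p hasFDerivAt_snd
  have hA : HasFDerivAt (fun p : (Fin n → ℝ) × (Fin n → ℝ) =>
      ∏ j ∈ Finset.univ.erase t, Fd (p.1 t - p.1 j))
      (∑ j ∈ Finset.univ.erase t,
        (∏ k ∈ (Finset.univ.erase t).erase j, Fd (p.1 t - p.1 k)) •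
          ((1 / 2 * Real.cot ((p.1 t - p.1 j) / 2) * Fd (p.1 t - p.1 j)) • Gmap n t j)) p := by
    apply HasFDerivAt.finset_prod
    intro j hj
    have hg : HasFDerivAt (fun p : (Fin n → ℝ) × (Fin n → ℝ) => p.1 t - p.1 j)
        (Gmap n t j) p := by
      have h1 := (hasFDerivAt_apply (𝕜 := ℝ) t p.1).comp p (hasFDerivAt_fst (p := p))
      have h2 := (hasFDerivAt_apply (𝕜 := ℝ) j p.1).comp p (hasFDerivAt_fst (p := p))
      have := h1.sub h2
      rwa [Gmap, ContinuousLinearMap.sub_comp]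
    have hcos : Real.cos (p.1 t - p.1 j) ≠ 1 :=
      cos_ne_one_U hp (Finset.ne_of_mem_erase hj)
    exact (hasDerivAt_Fd hcos).comp_hasFDerivAt (f := fun p : (Fin n → ℝ) × (Fin n → ℝ) => p.1 t - p.1 j) p hg
  exact hM.mul hA

lemma pM_qCoord {n : ℕ} (t r : Fin n) (p : (Fin n → ℝ) × (Fin n → ℝ)) (hp : p ∈ U n) :
    pM (qCoord t) r p = if t = r then Ad t p.1 else 0 := by
  rw [pM, (hasFDerivAt_qCoord t p hp).fderiv]
  simp [Gmap, Mmap, Pi.single_apply]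

lemma pTheta_qCoord {n : ℕ} (t r : Fin n) (p : (Fin n → ℝ) × (Fin n → ℝ)) (hp : p ∈ U n) :
    pTheta (qCoord t) r p = p.2 t * ∑ j ∈ Finset.univ.erase t,
      Ad t p.1 * (1 / 2 * Real.cot ((p.1 t - p.1 j) / 2)) *
        ((if t = r then (1:ℝ) else 0) - (if j = r then 1 else 0)) := by
  rw [pTheta, (hasFDerivAt_qCoord t p hp).fderiv]
  simp only [ContinuousLinearMap.add_apply, ContinuousLinearMap.smul_apply,
    ContinuousLinearMap.coe_sum', Finset.sum_apply, Gmap, Mmap,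
    ContinuousLinearMap.coe_comp', Function.comp_apply, ContinuousLinearMap.coe_fst',
    ContinuousLinearMap.coe_snd', ContinuousLinearMap.proj_apply,
    ContinuousLinearMap.coe_sub', Pi.sub_apply, smul_eq_mul, Pi.single_apply]
  rw [Pi.zero_apply, mul_zero, add_zero]
  congr 1
  apply Finset.sum_congr rfl
  intro j hj
  have hmul : (∏ k ∈ (Finset.univ.erase t).erase j, Fd (p.1 t - p.1 k)) * Fd (p.1 t - p.1 j)
      = Ad t p.1 := Finset.prod_erase_mul _ _ hj
  rw [← hmul]
  ring

lemma pTheta_qCoord_self {n : ℕ} (t : Fin n) (p : (Fin n → ℝ) × (Fin n → ℝ)) (hp : p ∈ U n) :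
    pTheta (qCoord t) t p = p.2 t * Ad t p.1 *
      ∑ j ∈ Finset.univ.erase t, 1 / 2 * Real.cot ((p.1 t - p.1 j) / 2) := by
  rw [pTheta_qCoord t t p hp, mul_assoc]
  congr 1
  rw [Finset.mul_sum]
  apply Finset.sum_congr rfl
  intro j hj
  have hjt : j ≠ t := Finset.ne_of_mem_erase hj
  simp [hjt]

lemma pTheta_qCoord_ne {n : ℕ} (t r : Fin n) (h : r ≠ t) (p : (Fin n → ℝ) × (Fin n → ℝ))
    (hp : p ∈ U n) :
    pTheta (qCoord t) r p
      = -(p.2 t * Ad t p.1 * (1 / 2 * Real.cot ((p.1 t - p.1 r) / 2))) := by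
  rw [pTheta_qCoord t r p hp]
  have htr : t ≠ r := Ne.symm h
  simp only [htr, if_false, zero_sub, mul_neg, mul_ite, mul_one, mul_zero,
    Finset.sum_neg_distrib, Finset.sum_ite_eq' (Finset.univ.erase t) r]
  simp [Finset.mem_erase, h]
  ring

lemma pTheta_coord {n : ℕ} (s r : Fin n) (p : (Fin n → ℝ) × (Fin n → ℝ)) :
    pTheta (fun x : (Fin n → ℝ) × (Fin n → ℝ) => x.1 s) r p = if s = r then 1 else 0 := by
  have h : HasFDerivAt (fun x : (Fin n → ℝ) × (Fin n → ℝ) => x.1 s)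
      ((ContinuousLinearMap.proj s : (Fin n → ℝ) →L[ℝ] ℝ).comp
        (ContinuousLinearMap.fst ℝ (Fin n → ℝ) (Fin n → ℝ))) p :=
    (hasFDerivAt_apply (𝕜 := ℝ) s p.1).comp p hasFDerivAt_fst
  rw [pTheta, h.fderiv]
  simp [Pi.single_apply]

lemma pM_coord {n : ℕ} (s r : Fin n) (p : (Fin n → ℝ) × (Fin n → ℝ)) :
    pM (fun x : (Fin n → ℝ) × (Fin n → ℝ) => x.1 s) r p = 0 := by
  have h : HasFDerivAt (fun x : (Fin n → ℝ) × (Fin n → ℝ) => x.1 s)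
      ((ContinuousLinearMap.proj s : (Fin n → ℝ) →L[ℝ] ℝ).comp
        (ContinuousLinearMap.fst ℝ (Fin n → ℝ) (Fin n → ℝ))) p :=
    (hasFDerivAt_apply (𝕜 := ℝ) s p.1).comp p hasFDerivAt_fst
  rw [pM, h.fderiv]
  simp

lemma cot_neg' (x : ℝ) : Real.cot (-x) = -Real.cot x := by
  simp [Real.cot_eq_cos_div_sin, Real.cos_neg, Real.sin_neg, neg_div, div_neg]


/-- The functions `q_s = m_s Π_{j≠s}|e^{iθ_s} − e^{iθ_j}|` satisfy
`{θ_s, q_t} = 2 q_t δ_{st}` and `{q_s, q_t} = 0`; in particular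
`θ_1,…,θ_n, (1/2)log q_1,…,(1/2)log q_n` are canonical coordinates. -/
theorem statement10 (n : ℕ) (hn : 1 ≤ n) (s t : Fin n) :
    ∀ p ∈ U n,
      pbr (fun x => x.1 s) (qCoord t) p = 2 * qCoord t p * (if s = t then 1 else 0) ∧
      pbr (qCoord s) (qCoord t) p = 0 := by
  intro p hp
  have hPM : ∀ u r : Fin n, pM (qCoord u) r p = if u = r then Ad u p.1 else 0 :=
    fun u r => pM_qCoord u r p hp
  constructor
  · by_cases hst : s = t
    · subst hst
      rw [pbr, qCoord_eq]
      simp only [hPM, pM_coord, pTheta_coord, zero_mul, mul_zero, sub_zero, zero_sub,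
        mul_ite, ite_mul, one_mul, zero_mul, mul_one, mul_zero, neg_zero, sub_self]
      simp [Finset.sum_ite_eq]
      ring
    · rw [pbr, qCoord_eq]
      simp only [hPM, pM_coord, pTheta_coord, zero_mul, mul_zero, sub_zero, zero_sub,
        mul_ite, ite_mul, one_mul, zero_mul, mul_one, mul_zero, neg_zero, sub_self]
      simp [Finset.sum_ite_eq, hst, Ne.symm hst]
  · by_cases hst : s = t
    · subst hst
      have e1 : (∑ r, 2 * p.2 r * (pTheta (qCoord s) r p * pM (qCoord s) r p -
          pM (qCoord s) r p * pTheta (qCoord s) r p)) = 0 :=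
        Finset.sum_eq_zero fun r _ => by ring
      have e2 : (∑ r, ∑ w, if r < w then
          2 * p.2 r * p.2 w * Real.cot ((p.1 r - p.1 w) / 2) *
            (pM (qCoord s) r p * pM (qCoord s) w p -
              pM (qCoord s) w p * pM (qCoord s) r p) else 0) = 0 :=
        Finset.sum_eq_zero fun r _ => Finset.sum_eq_zero fun w _ => by
          by_cases h : r < w
          · rw [if_pos h]; ring
          · rw [if_neg h]
      rw [pbr, e1, e2, add_zero]
    · have hPTst : pTheta (qCoord t) s p
          = p.2 t * Ad t p.1 * (1 / 2 * Real.cot ((p.1 s - p.1 t) / 2)) := by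
        rw [pTheta_qCoord_ne t s hst p hp,
          show (p.1 t - p.1 s) / 2 = -((p.1 s - p.1 t) / 2) by ring, cot_neg']
        ring
      have hPTts : pTheta (qCoord s) t p
          = -(p.2 s * Ad s p.1 * (1 / 2 * Real.cot ((p.1 s - p.1 t) / 2))) :=
        pTheta_qCoord_ne s t (Ne.symm hst) p hp
      have e1 : (∑ r, 2 * p.2 r * (pTheta (qCoord s) r p * pM (qCoord t) r p -
          pM (qCoord s) r p * pTheta (qCoord t) r p)) =
          2 * p.2 t * (pTheta (qCoord s) t p * Ad t p.1) -
          2 * p.2 s * (Ad s p.1 * pTheta (qCoord t) s p) := by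
        have hsplit : ∀ r : Fin n, 2 * p.2 r * (pTheta (qCoord s) r p *
            (if t = r then Ad t p.1 else 0) -
              (if s = r then Ad s p.1 else 0) * pTheta (qCoord t) r p)
          = (if t = r then 2 * p.2 r * (pTheta (qCoord s) r p * Ad t p.1) else 0)
            - (if s = r then 2 * p.2 r * (Ad s p.1 * pTheta (qCoord t) r p) else 0) := by
          intro r
          by_cases h1 : t = r <;> by_cases h2 : s = r <;> simp [h1, h2] <;> ring
        simp only [hPM, hsplit, Finset.sum_sub_distrib, Finset.sum_ite_eq,
          Finset.mem_univ, if_true]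
      have e2 : (∑ r, ∑ w, if r < w then
          2 * p.2 r * p.2 w * Real.cot ((p.1 r - p.1 w) / 2) *
            (pM (qCoord s) r p * pM (qCoord t) w p -
              pM (qCoord s) w p * pM (qCoord t) r p) else 0) =
          (if s < t then 2 * p.2 s * p.2 t * Real.cot ((p.1 s - p.1 t) / 2) *
            (Ad s p.1 * Ad t p.1) else 0)
          - (if t < s then 2 * p.2 t * p.2 s * Real.cot ((p.1 t - p.1 s) / 2) *
            (Ad s p.1 * Ad t p.1) else 0) := by
        have hsplit : ∀ r w : Fin n, (if r < w then
            2 * p.2 r * p.2 w * Real.cot ((p.1 r - p.1 w) / 2) *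
              ((if s = r then Ad s p.1 else 0) * (if t = w then Ad t p.1 else 0) -
                (if s = w then Ad s p.1 else 0) * (if t = r then Ad t p.1 else 0)) else 0)
          = (if t = w then (if s = r then (if r < w then
              2 * p.2 r * p.2 w * Real.cot ((p.1 r - p.1 w) / 2) *
                (Ad s p.1 * Ad t p.1) else 0) else 0) else 0)
            - (if s = w then (if t = r then (if r < w then
              2 * p.2 r * p.2 w * Real.cot ((p.1 r - p.1 w) / 2) *
                (Ad s p.1 * Ad t p.1) else 0) else 0) else 0) := by
          intro r w
          by_cases h5 : r < w
          · have h6 : r ≠ w := ne_of_lt h5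
            by_cases h1 : s = r <;> by_cases h2 : t = w <;> by_cases h3 : s = w <;>
              by_cases h4 : t = r <;>
              simp [h1, h2, h3, h4, h5, h6, h6.symm] <;> try ring
          · by_cases h1 : s = r <;> by_cases h2 : t = w <;> by_cases h3 : s = w <;>
              by_cases h4 : t = r <;> simp [h1, h2, h3, h4, h5] <;> try ring
        simp only [hPM, hsplit, Finset.sum_sub_distrib, Finset.sum_ite_eq,
          Finset.mem_univ, if_true]
      rw [pbr, e1, e2, hPTst, hPTts,
        show (p.1 t - p.1 s) / 2 = -((p.1 s - p.1 t) / 2) by ring, cot_neg']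
      rcases lt_or_gt_of_ne hst with h | h
      · rw [if_pos h, if_neg (asymm h)]
        ring
      · rw [if_neg (asymm h), if_pos h]
        ring
end

section
/- Let n ≥ 1, let z₁,…,z_n be distinct points on the unit circle in ℂ, let μ̃₁,…,μ̃_n be positive reals, and let h₁,…,h_n be reals. For ζ ∈ ℂ \ {z₁,…,z_n} define F̃(ζ) := Σ_{j=1}^n μ̃_j (z_j+ζ)/(z_j−ζ) and F̃_h(ζ) := Σ_{j=1}^n h_j μ̃_j (z_j+ζ)/(z_j−ζ). Then for all z ≠ w in ℂ \ {z₁,…,z_n}: i(w−z) Σ_{j,k=1}^n ((z_j+z_k)(h_j+h_k)(z_j z_k + zw)) / ((z_j−z)(z_k−z)(z_j−w)(z_k−w)) · μ̃_j μ̃_k = i ((w+z)/(w−z)) (F̃(z)−F̃(w)) (F̃_h(z)−F̃_h(w)) − i F̃(0) (F̃_h(z)−F̃_h(w)) − i F̃_h(0) (F̃(z)−F̃(w)). -/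
open Complex

private lemma sum_sym_eq {n : ℕ} (P Q : Fin n → Fin n → ℂ)
    (hpq : ∀ j k, P j k + P k j = Q j k + Q k j) :
    ∑ j, ∑ k, P j k = ∑ j, ∑ k, Q j k := by
  have h2 : (2 : ℂ) * (∑ j, ∑ k, P j k) = 2 * (∑ j, ∑ k, Q j k) := by
    have hP : ∑ j, ∑ k, P j k = ∑ j, ∑ k, P k j := Finset.sum_comm
    have hQ : ∑ j, ∑ k, Q j k = ∑ j, ∑ k, Q k j := Finset.sum_comm
    calc (2 : ℂ) * (∑ j, ∑ k, P j k)
        = (∑ j, ∑ k, P j k) + (∑ j, ∑ k, P k j) := by rw [← hP]; ring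
      _ = ∑ j, ∑ k, (P j k + P k j) := by simp [Finset.sum_add_distrib]
      _ = ∑ j, ∑ k, (Q j k + Q k j) := by
          exact Finset.sum_congr rfl fun j _ => Finset.sum_congr rfl fun k _ => hpq j k
      _ = (∑ j, ∑ k, Q j k) + (∑ j, ∑ k, Q k j) := by simp [Finset.sum_add_distrib]
      _ = 2 * (∑ j, ∑ k, Q j k) := by rw [← hQ]; ring
  exact mul_left_cancel₀ two_ne_zero h2

private lemma hlp0 (c x E m N D : ℂ) (hE : E ≠ 0) (hD : D ≠ 0)
    (hq : c * x * m * D = N * E) : c * (x / E * m) = N / D := by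
  rw [eq_div_iff hD, show c * (x / E * m) * D = c * x * m * D / E from by ring,
    div_eq_iff hE, hq]

private lemma hlp1 (c m y E N D : ℂ) (hE : E ≠ 0) (hD : D ≠ 0)
    (hq : c * m * y * D = N * E) : c * (m * (y / E)) = N / D := by
  rw [eq_div_iff hD, show c * (m * (y / E)) * D = c * m * y * D / E from by ring,
    div_eq_iff hE, hq]

private lemma hlp2 (c w r x E1 y E2 N D : ℂ) (hr : r ≠ 0) (h1 : E1 ≠ 0) (h2 : E2 ≠ 0)
    (hD : D ≠ 0) (hq : c * w * x * y * D = N * (r * E1 * E2)) :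
    c * (w / r) * (x / E1 * (y / E2)) = N / D := by
  rw [eq_div_iff hD,
    show c * (w / r) * (x / E1 * (y / E2)) * D = c * w * x * y * D / (r * E1 * E2) from by ring,
    div_eq_iff (mul_ne_zero (mul_ne_zero hr h1) h2), hq]

set_option maxHeartbeats 1600000 in
/-- For the Carathéodory function `F̃` of a finite unnormalized measure
`μ̃ = Σ μ̃_j δ_{z_j}` on the unit circle and its `h`-weighted analogue `F̃_h`, one has the
identity (the value of the `h`-bracket `{F̃(z), F̃(w)}_h`):
`i(w−z) Σ_{j,k} ((z_j+z_k)(h_j+h_k)(z_j z_k + zw))/((z_j−z)(z_k−z)(z_j−w)(z_k−w)) μ̃_j μ̃_k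
  = i((w+z)/(w−z))(F̃(z)−F̃(w))(F̃_h(z)−F̃_h(w)) − i F̃(0)(F̃_h(z)−F̃_h(w))
    − i F̃_h(0)(F̃(z)−F̃(w))`. -/
theorem statement14 (n : ℕ) (hn : 1 ≤ n) (z : Fin n → ℂ) (μ h : Fin n → ℝ)
    (hz : ∀ j, ‖z j‖ = 1) (hinj : Function.Injective z)
    (hμ : ∀ j, 0 < μ j)
    (F Fh : ℂ → ℂ)
    (hF : ∀ ζ, F ζ = ∑ j, (μ j : ℂ) * (z j + ζ) / (z j - ζ))
    (hFh : ∀ ζ, Fh ζ = ∑ j, (h j : ℂ) * (μ j : ℂ) * (z j + ζ) / (z j - ζ)) :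
    ∀ zz ww : ℂ, zz ≠ ww → (∀ j, zz ≠ z j) → (∀ j, ww ≠ z j) →
      Complex.I * (ww - zz) *
        ∑ j, ∑ k, ((z j + z k) * ((h j : ℂ) + (h k : ℂ)) * (z j * z k + zz * ww)) /
          ((z j - zz) * (z k - zz) * (z j - ww) * (z k - ww)) *
          ((μ j : ℂ) * (μ k : ℂ)) =
      Complex.I * ((ww + zz) / (ww - zz)) * (F zz - F ww) * (Fh zz - Fh ww) -
        Complex.I * F 0 * (Fh zz - Fh ww) - Complex.I * Fh 0 * (F zz - F ww) := by
  intro zz ww hne hzz hww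
  have hwz : ww - zz ≠ 0 := sub_ne_zero.mpr (Ne.symm hne)
  have hjz : ∀ j, z j - zz ≠ 0 := fun j => sub_ne_zero.mpr fun e => hzz j e.symm
  have hjw : ∀ j, z j - ww ≠ 0 := fun j => sub_ne_zero.mpr fun e => hww j e.symm
  have hz0 : ∀ j, z j ≠ 0 := fun j e => by
    have := hz j; rw [e] at this; simp at this
  set A : Fin n → ℂ := fun j =>
    (μ j : ℂ) * (2 * z j * (zz - ww)) / ((z j - zz) * (z j - ww)) with hAdef
  set B : Fin n → ℂ := fun j =>
    (h j : ℂ) * (μ j : ℂ) * (2 * z j * (zz - ww)) / ((z j - zz) * (z j - ww)) with hBdef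
  have hA : F zz - F ww = ∑ j, A j := by
    rw [hF, hF, ← Finset.sum_sub_distrib]
    refine Finset.sum_congr rfl fun j _ => ?_
    rw [hAdef, div_sub_div _ _ (hjz j) (hjw j)]
    rw [div_eq_div_iff (mul_ne_zero (hjz j) (hjw j)) (mul_ne_zero (hjz j) (hjw j))]
    ring
  have hB : Fh zz - Fh ww = ∑ j, B j := by
    rw [hFh, hFh, ← Finset.sum_sub_distrib]
    refine Finset.sum_congr rfl fun j _ => ?_
    rw [hBdef, div_sub_div _ _ (hjz j) (hjw j)]
    rw [div_eq_div_iff (mul_ne_zero (hjz j) (hjw j)) (mul_ne_zero (hjz j) (hjw j))]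
    ring
  have hF0 : F 0 = ∑ j, (μ j : ℂ) := by
    rw [hF]
    refine Finset.sum_congr rfl fun j _ => ?_
    rw [sub_zero, add_zero, mul_div_assoc, div_self (hz0 j), mul_one]
  have hFh0 : Fh 0 = ∑ j, (h j : ℂ) * (μ j : ℂ) := by
    rw [hFh]
    refine Finset.sum_congr rfl fun j _ => ?_
    rw [sub_zero, add_zero, mul_div_assoc, div_self (hz0 j), mul_one]
  rw [hA, hB, hF0, hFh0]
  have expand : Complex.I * ((ww + zz) / (ww - zz)) * (∑ j, A j) * (∑ j, B j) -
      Complex.I * (∑ j, (μ j : ℂ)) * (∑ j, B j) -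
      Complex.I * (∑ j, (h j : ℂ) * (μ j : ℂ)) * (∑ j, A j) =
      ∑ j, ∑ k, (Complex.I * ((ww + zz) / (ww - zz)) * (A j * B k) -
        Complex.I * ((μ j : ℂ) * B k) -
        Complex.I * ((h j : ℂ) * (μ j : ℂ) * A k)) := by
    have eab : (∑ j, A j) * (∑ k, B k) = ∑ j, ∑ k, A j * B k := Fintype.sum_mul_sum A B
    have emb : (∑ j, (μ j : ℂ)) * (∑ k, B k) = ∑ j, ∑ k, (μ j : ℂ) * B k :=
      Fintype.sum_mul_sum _ B
    have eha : (∑ j, (h j : ℂ) * (μ j : ℂ)) * (∑ k, A k) =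
        ∑ j, ∑ k, ((h j : ℂ) * (μ j : ℂ)) * A k := Fintype.sum_mul_sum _ A
    calc Complex.I * ((ww + zz) / (ww - zz)) * (∑ j, A j) * (∑ j, B j) -
        Complex.I * (∑ j, (μ j : ℂ)) * (∑ j, B j) -
        Complex.I * (∑ j, (h j : ℂ) * (μ j : ℂ)) * (∑ j, A j)
        = Complex.I * ((ww + zz) / (ww - zz)) * ((∑ j, A j) * (∑ k, B k)) -
          Complex.I * ((∑ j, (μ j : ℂ)) * (∑ k, B k)) -
          Complex.I * ((∑ j, (h j : ℂ) * (μ j : ℂ)) * (∑ k, A k)) := by ring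
      _ = Complex.I * ((ww + zz) / (ww - zz)) * (∑ j, ∑ k, A j * B k) -
          Complex.I * (∑ j, ∑ k, (μ j : ℂ) * B k) -
          Complex.I * (∑ j, ∑ k, ((h j : ℂ) * (μ j : ℂ)) * A k) := by rw [eab, emb, eha]
      _ = _ := by
          simp only [Finset.mul_sum, ← Finset.sum_sub_distrib]
  rw [expand]
  have hkey : ∀ j k : Fin n,
      (Complex.I * (ww - zz) *
        (((z j + z k) * ((h j : ℂ) + (h k : ℂ)) * (z j * z k + zz * ww)) /
          ((z j - zz) * (z k - zz) * (z j - ww) * (z k - ww)) *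
          ((μ j : ℂ) * (μ k : ℂ)))) +
      (Complex.I * (ww - zz) *
        (((z k + z j) * ((h k : ℂ) + (h j : ℂ)) * (z k * z j + zz * ww)) /
          ((z k - zz) * (z j - zz) * (z k - ww) * (z j - ww)) *
          ((μ k : ℂ) * (μ j : ℂ)))) =
      (Complex.I * ((ww + zz) / (ww - zz)) * (A j * B k) -
        Complex.I * ((μ j : ℂ) * B k) -
        Complex.I * ((h j : ℂ) * (μ j : ℂ) * A k)) +
      (Complex.I * ((ww + zz) / (ww - zz)) * (A k * B j) -
        Complex.I * ((μ k : ℂ) * B j) -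
        Complex.I * ((h k : ℂ) * (μ k : ℂ) * A j)) := by
    intro j k
    have hu := hjz j
    have hv := hjz k
    have hp := hjw j
    have hq4 := hjw k
    have hE1 : (z j - zz) * (z j - ww) ≠ 0 := mul_ne_zero hu hp
    have hE2 : (z k - zz) * (z k - ww) ≠ 0 := mul_ne_zero hv hq4
    have hEL : (z j - zz) * (z k - zz) * (z j - ww) * (z k - ww) ≠ 0 :=
      mul_ne_zero (mul_ne_zero (mul_ne_zero hu hv) hp) hq4
    have hEL' : (z k - zz) * (z j - zz) * (z k - ww) * (z j - ww) ≠ 0 :=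
      mul_ne_zero (mul_ne_zero (mul_ne_zero hv hu) hq4) hp
    have hD : (z j - zz) * (z k - zz) * (z j - ww) * (z k - ww) * (ww - zz) ≠ 0 :=
      mul_ne_zero hEL hwz
    simp only [hAdef, hBdef]
    have el1 := hlp0 (Complex.I * (ww - zz))
      ((z j + z k) * ((h j : ℂ) + (h k : ℂ)) * (z j * z k + zz * ww))
      ((z j - zz) * (z k - zz) * (z j - ww) * (z k - ww))
      ((μ j : ℂ) * (μ k : ℂ))
      (Complex.I * (ww - zz) * (ww - zz) *
        ((z j + z k) * ((h j : ℂ) + (h k : ℂ)) * (z j * z k + zz * ww)) *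
        ((μ j : ℂ) * (μ k : ℂ)))
      ((z j - zz) * (z k - zz) * (z j - ww) * (z k - ww) * (ww - zz))
      hEL hD (by ring)
    have el2 := hlp0 (Complex.I * (ww - zz))
      ((z k + z j) * ((h k : ℂ) + (h j : ℂ)) * (z k * z j + zz * ww))
      ((z k - zz) * (z j - zz) * (z k - ww) * (z j - ww))
      ((μ k : ℂ) * (μ j : ℂ))
      (Complex.I * (ww - zz) * (ww - zz) *
        ((z j + z k) * ((h j : ℂ) + (h k : ℂ)) * (z j * z k + zz * ww)) *
        ((μ j : ℂ) * (μ k : ℂ)))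
      ((z j - zz) * (z k - zz) * (z j - ww) * (z k - ww) * (ww - zz))
      hEL' hD (by ring)
    have e1 := hlp2 Complex.I (ww + zz) (ww - zz)
      ((μ j : ℂ) * (2 * z j * (zz - ww))) ((z j - zz) * (z j - ww))
      ((h k : ℂ) * (μ k : ℂ) * (2 * z k * (zz - ww))) ((z k - zz) * (z k - ww))
      (Complex.I * (ww + zz) * ((μ j : ℂ) * (2 * z j * (zz - ww))) *
        ((h k : ℂ) * (μ k : ℂ) * (2 * z k * (zz - ww))))
      ((z j - zz) * (z k - zz) * (z j - ww) * (z k - ww) * (ww - zz))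
      hwz hE1 hE2 hD (by ring)
    have e2 := hlp1 Complex.I ((μ j : ℂ))
      ((h k : ℂ) * (μ k : ℂ) * (2 * z k * (zz - ww))) ((z k - zz) * (z k - ww))
      (Complex.I * (μ j : ℂ) * ((h k : ℂ) * (μ k : ℂ) * (2 * z k * (zz - ww))) *
        ((z j - zz) * (z j - ww) * (ww - zz)))
      ((z j - zz) * (z k - zz) * (z j - ww) * (z k - ww) * (ww - zz))
      hE2 hD (by ring)
    have e3 := hlp1 Complex.I ((h j : ℂ) * (μ j : ℂ))
      ((μ k : ℂ) * (2 * z k * (zz - ww))) ((z k - zz) * (z k - ww))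
      (Complex.I * ((h j : ℂ) * (μ j : ℂ)) * ((μ k : ℂ) * (2 * z k * (zz - ww))) *
        ((z j - zz) * (z j - ww) * (ww - zz)))
      ((z j - zz) * (z k - zz) * (z j - ww) * (z k - ww) * (ww - zz))
      hE2 hD (by ring)
    have e4 := hlp2 Complex.I (ww + zz) (ww - zz)
      ((μ k : ℂ) * (2 * z k * (zz - ww))) ((z k - zz) * (z k - ww))
      ((h j : ℂ) * (μ j : ℂ) * (2 * z j * (zz - ww))) ((z j - zz) * (z j - ww))
      (Complex.I * (ww + zz) * ((μ k : ℂ) * (2 * z k * (zz - ww))) *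
        ((h j : ℂ) * (μ j : ℂ) * (2 * z j * (zz - ww))))
      ((z j - zz) * (z k - zz) * (z j - ww) * (z k - ww) * (ww - zz))
      hwz hE2 hE1 hD (by ring)
    have e5 := hlp1 Complex.I ((μ k : ℂ))
      ((h j : ℂ) * (μ j : ℂ) * (2 * z j * (zz - ww))) ((z j - zz) * (z j - ww))
      (Complex.I * (μ k : ℂ) * ((h j : ℂ) * (μ j : ℂ) * (2 * z j * (zz - ww))) *
        ((z k - zz) * (z k - ww) * (ww - zz)))
      ((z j - zz) * (z k - zz) * (z j - ww) * (z k - ww) * (ww - zz))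
      hE1 hD (by ring)
    have e6 := hlp1 Complex.I ((h k : ℂ) * (μ k : ℂ))
      ((μ j : ℂ) * (2 * z j * (zz - ww))) ((z j - zz) * (z j - ww))
      (Complex.I * ((h k : ℂ) * (μ k : ℂ)) * ((μ j : ℂ) * (2 * z j * (zz - ww))) *
        ((z k - zz) * (z k - ww) * (ww - zz)))
      ((z j - zz) * (z k - zz) * (z j - ww) * (z k - ww) * (ww - zz))
      hE1 hD (by ring)
    rw [el1, el2, e1, e2, e3, e4, e5, e6]
    rw [← add_div, ← sub_div, ← sub_div, ← sub_div, ← sub_div, ← add_div]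
    rw [div_eq_div_iff hD hD]
    ring
  calc Complex.I * (ww - zz) *
        ∑ j, ∑ k, ((z j + z k) * ((h j : ℂ) + (h k : ℂ)) * (z j * z k + zz * ww)) /
          ((z j - zz) * (z k - zz) * (z j - ww) * (z k - ww)) *
          ((μ j : ℂ) * (μ k : ℂ))
      = ∑ j, ∑ k, (Complex.I * (ww - zz) *
          (((z j + z k) * ((h j : ℂ) + (h k : ℂ)) * (z j * z k + zz * ww)) /
            ((z j - zz) * (z k - zz) * (z j - ww) * (z k - ww)) *
            ((μ j : ℂ) * (μ k : ℂ)))) := by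
        simp only [Finset.mul_sum]
    _ = ∑ j, ∑ k, (Complex.I * ((ww + zz) / (ww - zz)) * (A j * B k) -
          Complex.I * ((μ j : ℂ) * B k) -
          Complex.I * ((h j : ℂ) * (μ j : ℂ) * A k)) :=
        sum_sym_eq _ _ hkey
end

section
/- Let N ≥ 1 and let z₁,…,z_{2N} be distinct points on the unit circle with z_{s+N} = conj(z_s) and Im z_s > 0 for 1 ≤ s ≤ N; let μ₁,…,μ_{2N} be positive reals with μ_{s+N} = μ_s for 1 ≤ s ≤ N and Σ_{a=1}^{2N} μ_a = 1. Let h be a complex-valued function on the unit circle taking real values, and set h₊(z) := (h(z)+h(conj z))/2 and h₋(z) := (h(z)−h(conj z))/2. Define, for 1 ≤ a, b ≤ 2N, the numbers B(a,b) := 2i z_a h(z_a) μ_b (δ_{ab} − μ_a) (the h-bracket values {z_a, μ_b}_h). Then for all 1 ≤ s, t ≤ N: B(s,t) + B(s, t+N) + B(s+N, t) + B(s+N, t+N) = 2i(z_s + conj(z_s)) h₊(z_s) μ_t (δ_{st} − 2μ_s) + 2i(z_s − conj(z_s)) h₋(z_s) μ_t (δ_{st} − 2μ_s). In particular, if h(conj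 z) = −h(z) for all z on the unit circle, then this quantity equals 2i(z_s − conj(z_s)) h(z_s) μ_t (δ_{st} − 2μ_s), which is a real number. -/
open Complex

/-- (Key computation in Proposition 6.1.) For a conjugation-symmetric
probability measure on the unit circle (atoms `z_{s+N} = conj(z_s)` with equal weights
`μ_{s+N} = μ_s`), with `B(a,b) = {z_a, μ_b}_h = 2i z_a h(z_a) μ_b (δ_{ab} − μ_a)` and
`h₊, h₋` the even and odd parts of `h`, for all `1 ≤ s,t ≤ N`:
`B(s,t) + B(s,t+N) + B(s+N,t) + B(s+N,t+N)
  = 2i(z_s + conj z_s) h₊(z_s) μ_t (δ_{st} − 2μ_s)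
    + 2i(z_s − conj z_s) h₋(z_s) μ_t (δ_{st} − 2μ_s)`;
and if `h(conj z) = −h(z)` on the circle, this equals
`2i(z_s − conj z_s) h(z_s) μ_t (δ_{st} − 2μ_s)`, a real number. -/
theorem statement18 (N : ℕ) (hN : 1 ≤ N) (z : ℕ → ℂ) (μ : ℕ → ℝ)
    (hsym : ∀ s, 1 ≤ s → s ≤ N →
      z (s + N) = (starRingEnd ℂ) (z s) ∧ μ (s + N) = μ s ∧ 0 < (z s).im)
    (hz1 : ∀ a ∈ Finset.Icc 1 (2 * N), ‖z a‖ = 1)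
    (hdist : ∀ a ∈ Finset.Icc 1 (2 * N), ∀ b ∈ Finset.Icc 1 (2 * N),
      a ≠ b → z a ≠ z b)
    (hμpos : ∀ a ∈ Finset.Icc 1 (2 * N), 0 < μ a)
    (hsum : ∑ a ∈ Finset.Icc 1 (2 * N), μ a = 1)
    (h : ℂ → ℂ) (hreal : ∀ ζ : ℂ, ‖ζ‖ = 1 → (h ζ).im = 0)
    (hp hm : ℂ → ℂ)
    (hhp : ∀ ζ, hp ζ = (h ζ + h ((starRingEnd ℂ) ζ)) / 2)
    (hhm : ∀ ζ, hm ζ = (h ζ - h ((starRingEnd ℂ) ζ)) / 2)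
    (B : ℕ → ℕ → ℂ)
    (hB : ∀ a b, B a b = 2 * Complex.I * z a * h (z a) * (μ b : ℂ) *
      ((if a = b then 1 else 0) - (μ a : ℂ))) :
    ∀ s t, 1 ≤ s → s ≤ N → 1 ≤ t → t ≤ N →
      (B s t + B s (t + N) + B (s + N) t + B (s + N) (t + N) =
        2 * Complex.I * (z s + (starRingEnd ℂ) (z s)) * hp (z s) * (μ t : ℂ) *
          ((if s = t then 1 else 0) - 2 * (μ s : ℂ)) +
        2 * Complex.I * (z s - (starRingEnd ℂ) (z s)) * hm (z s) * (μ t : ℂ) *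
          ((if s = t then 1 else 0) - 2 * (μ s : ℂ))) ∧
      ((∀ ζ : ℂ, ‖ζ‖ = 1 → h ((starRingEnd ℂ) ζ) = -h ζ) →
        B s t + B s (t + N) + B (s + N) t + B (s + N) (t + N) =
          2 * Complex.I * (z s - (starRingEnd ℂ) (z s)) * h (z s) * (μ t : ℂ) *
            ((if s = t then 1 else 0) - 2 * (μ s : ℂ)) ∧
        (B s t + B s (t + N) + B (s + N) t + B (s + N) (t + N)).im = 0) := by
  intro s t hs1 hsN ht1 htN
  obtain ⟨hzs, hμs, him⟩ := hsym s hs1 hsN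
  obtain ⟨hzt, hμt, -⟩ := hsym t ht1 htN
  have habs : ‖z s‖ = 1 := hz1 s (by simp only [Finset.mem_Icc]; omega)
  have key : B s t + B s (t + N) + B (s + N) t + B (s + N) (t + N) =
      2 * Complex.I * (μ t : ℂ) * ((if s = t then 1 else 0) - 2 * (μ s : ℂ)) *
        (z s * h (z s) + (starRingEnd ℂ) (z s) * h ((starRingEnd ℂ) (z s))) := by
    simp only [hB, hzs, hμs, hμt, add_left_inj,
      if_neg (by omega : s ≠ t + N), if_neg (by omega : s + N ≠ t)]
    ring
  refine ⟨by rw [key, hhp, hhm]; ring, fun hodd => ?_⟩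
  have hconj := hodd (z s) habs
  have key2 : B s t + B s (t + N) + B (s + N) t + B (s + N) (t + N) =
      2 * Complex.I * (z s - (starRingEnd ℂ) (z s)) * h (z s) * (μ t : ℂ) *
        ((if s = t then 1 else 0) - 2 * (μ s : ℂ)) := by
    rw [key, hconj]; ring
  refine ⟨key2, ?_⟩
  rw [key2]
  set E : ℂ := 2 * Complex.I * (z s - (starRingEnd ℂ) (z s)) * h (z s) * (μ t : ℂ) *
      ((if s = t then 1 else 0) - 2 * (μ s : ℂ)) with hE
  have hre : h (z s) = ((h (z s)).re : ℂ) := by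
    have := hreal (z s) habs
    apply Complex.ext <;> simp [this]
  have hd : ((if s = t then 1 else 0 : ℂ)) = ((if s = t then (1:ℝ) else 0 : ℝ) : ℂ) := by
    split <;> simp
  have : (starRingEnd ℂ) E = E := by
    rw [hE, hre, hd]
    simp only [map_mul, map_sub, map_add, Complex.conj_I, Complex.conj_ofReal,
      Complex.conj_conj, map_ofNat]
    ring
  exact Complex.conj_eq_iff_im.mp this
end

section
/- Let z, w ∈ ℂ \ {0, 1, −1} with w ∉ {z, 1/z}, and let a, b, p, q ∈ ℂ. Define the function B on pairs by B(ζ, ω; A, B', P', Q') := i(P' − Q') [ ((ω+ζ)/(ω−ζ))(A − B') + A·B' − 1 ], and set B₁ := B(z, w; a, b, p, q), B₂ := B(1/z, w; −a, b, p, q), B₃ := B(z, 1/w; a, −b, p, q), B₄ := B(1/z, 1/w; −a, −b, p, q). Set λ := z + 1/z, ξ := w + 1/w, m_λ := a/(z − 1/z), m_ξ := b/(w − 1/w), n_λ := −i p, n_ξ := −i q. Then (B₁ − B₂ − B₃ + B₄) / (4 (z − 1/z)(w − 1/w)) = (n_λ − n_ξ) · [ (m_λ − m_ξ)/(λ − ξ)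 − m_λ m_ξ ]. -/
set_option maxHeartbeats 1600000


open Complex

/-- (Proposition 6.2 in algebraic form.) With
`B(ζ,ω; A,B',P',Q') = i(P'−Q')[((ω+ζ)/(ω−ζ))(A−B') + A·B' − 1]` the `h`-bracket formula,
`B₁ = B(z,w;a,b,p,q)`, `B₂ = B(1/z,w;−a,b,p,q)`, `B₃ = B(z,1/w;a,−b,p,q)`,
`B₄ = B(1/z,1/w;−a,−b,p,q)`, and `λ = z+1/z`, `ξ = w+1/w`, `m_λ = a/(z−1/z)`,
`m_ξ = b/(w−1/w)`, `n_λ = −ip`, `n_ξ = −iq`, one has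
`(B₁−B₂−B₃+B₄)/(4(z−1/z)(w−1/w)) = (n_λ−n_ξ)[(m_λ−m_ξ)/(λ−ξ) − m_λ m_ξ]`. -/
theorem statement19 (z w a b p q : ℂ)
    (hz0 : z ≠ 0) (hz1 : z ≠ 1) (hz1' : z ≠ -1)
    (hw0 : w ≠ 0) (hw1 : w ≠ 1) (hw1' : w ≠ -1)
    (hwz : w ≠ z) (hwz' : w ≠ 1 / z)
    (Bf : ℂ → ℂ → ℂ → ℂ → ℂ → ℂ → ℂ)
    (hBf : ∀ ζ ω A B' P' Q', Bf ζ ω A B' P' Q' =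
      Complex.I * (P' - Q') * (((ω + ζ) / (ω - ζ)) * (A - B') + A * B' - 1)) :
    (Bf z w a b p q - Bf (1 / z) w (-a) b p q - Bf z (1 / w) a (-b) p q +
        Bf (1 / z) (1 / w) (-a) (-b) p q) /
      (4 * (z - 1 / z) * (w - 1 / w)) =
    ((-Complex.I * p) - (-Complex.I * q)) *
      ((a / (z - 1 / z) - b / (w - 1 / w)) / ((z + 1 / z) - (w + 1 / w)) -
        (a / (z - 1 / z)) * (b / (w - 1 / w))) := by
  simp only [hBf]
  have hz2 : z*z - 1 ≠ 0 := by
    intro h; rcases mul_self_eq_one_iff.mp (by linear_combination h) with h1 | h1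
    · exact hz1 h1
    · exact hz1' h1
  have hw2 : w*w - 1 ≠ 0 := by
    intro h; rcases mul_self_eq_one_iff.mp (by linear_combination h) with h1 | h1
    · exact hw1 h1
    · exact hw1' h1
  have h1 : w - z ≠ 0 := sub_ne_zero.mpr hwz
  have h2 : w*z - 1 ≠ 0 := by
    intro h
    apply hwz'
    field_simp
    linear_combination h
  have h3 : z - 1/z ≠ 0 := by
    have e : z - 1/z = (z*z-1)/z := by field_simp
    rw [e]; exact div_ne_zero hz2 hz0
  have h4 : w - 1/w ≠ 0 := by
    have e : w - 1/w = (w*w-1)/w := by field_simp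
    rw [e]; exact div_ne_zero hw2 hw0
  have h5 : w - 1/z ≠ 0 := sub_ne_zero.mpr hwz'
  have h6 : 1/w - z ≠ 0 := by
    intro h
    apply h2
    have : 1/w = z := by linear_combination h
    field_simp at this
    linear_combination -this
  have h7 : 1/w - 1/z ≠ 0 := by
    intro h
    apply h1
    field_simp at h
    have := sub_ne_zero.mpr (fun hh : w = z => hwz hh)
    linear_combination -h
  have h8 : z + 1/z - (w + 1/w) ≠ 0 := by
    have : z + 1/z - (w + 1/w) = -((w-z)*(w*z-1))/(w*z) := by
      field_simp; ring
    rw [this]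
    exact div_ne_zero (neg_ne_zero.mpr (mul_ne_zero h1 h2)) (mul_ne_zero hw0 hz0)
  have eA : (w + 1/z)/(w - 1/z) = (w*z+1)/(w*z-1) := by
    rw [div_eq_div_iff h5 h2]; field_simp; try ring
  have eB : (1/w + z)/(1/w - z) = -((w*z+1)/(w*z-1)) := by
    rw [show -((w*z+1)/(w*z-1)) = (-(w*z+1))/(w*z-1) by ring, div_eq_div_iff h6 h2]
    field_simp; try ring
  have eC : (1/w + 1/z)/(1/w - 1/z) = -((w+z)/(w-z)) := by
    rw [show -((w+z)/(w-z)) = (-(w+z))/(w-z) by ring, div_eq_div_iff h7 h1]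
    field_simp; try ring
  have ez : z - 1/z = (z*z-1)/z := by field_simp
  have ew : w - 1/w = (w*w-1)/w := by field_simp
  have exi : z + 1/z - (w + 1/w) = (-((w-z)*(w*z-1)))/(w*z) := by field_simp; ring
  rw [eA, eB, eC, ez, ew, exi]
  have hd1 : (z*z-1)/z ≠ 0 := div_ne_zero hz2 hz0
  have hd2 : (w*w-1)/w ≠ 0 := div_ne_zero hw2 hw0
  have hd3 : (-((w-z)*(w*z-1)))/(w*z) ≠ 0 :=
    div_ne_zero (neg_ne_zero.mpr (mul_ne_zero h1 h2)) (mul_ne_zero hw0 hz0)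
  have hD : (-(w * z * 8) + w * z ^ 5 * 8 + w ^ 2 * 4 + w ^ 2 * z ^ 2 * 8 +
      (-(w ^ 2 * z ^ 4 * 8) - w ^ 2 * z ^ 6 * 4) + (-(w ^ 4 * 4) - w ^ 4 * z ^ 2 * 8) +
      w ^ 4 * z ^ 4 * 8 + w ^ 4 * z ^ 6 * 4 + w ^ 5 * z * 8 +
      (-(w ^ 5 * z ^ 5 * 8) - w ^ 6 * z ^ 2 * 4) + w ^ 6 * z ^ 4 * 4 +
      (z ^ 2 * 4 - z ^ 4 * 4) : ℂ) ≠ 0 := by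
    have e : (-(w * z * 8) + w * z ^ 5 * 8 + w ^ 2 * 4 + w ^ 2 * z ^ 2 * 8 +
        (-(w ^ 2 * z ^ 4 * 8) - w ^ 2 * z ^ 6 * 4) + (-(w ^ 4 * 4) - w ^ 4 * z ^ 2 * 8) +
        w ^ 4 * z ^ 4 * 8 + w ^ 4 * z ^ 6 * 4 + w ^ 5 * z * 8 +
        (-(w ^ 5 * z ^ 5 * 8) - w ^ 6 * z ^ 2 * 4) + w ^ 6 * z ^ 4 * 4 +
        (z ^ 2 * 4 - z ^ 4 * 4) : ℂ)
        = 4 * (z*z-1) * (w*w-1) * ((w-z)*(w-z)) * ((w*z-1)*(w*z-1)) := by ring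
    rw [e]
    exact mul_ne_zero (mul_ne_zero (mul_ne_zero (mul_ne_zero (by norm_num) hz2) hw2)
      (mul_ne_zero h1 h1)) (mul_ne_zero h2 h2)
  field_simp
  have hz2' : z ^ 2 - 1 ≠ 0 := by rw [sq]; exact hz2
  have hw2' : w ^ 2 - 1 ≠ 0 := by rw [sq]; exact hw2
  field_simp
  ring
end
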